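/- arXiv:1709.07635 — 7 statements merged into one kernel-verified Lean document; each statement's English description precedes it below -/
import Mathlib

section
/- Let n ∈ ℕ and ε₁,...,ε₅ > 0. Let G ⊆ {-1,1}^n and E ⊆ G with Pr_{z uniform}[z ∈ E] ≥ 1 - ε₁. Let T be a distribution over functions T : {-1,1}^n → {-1,1} such that for every z ∈ E, Pr_{T∼𝐓}[T(z) = -1] ≥ 1 - ε₂, and for every z ∉ G, Pr_{T∼𝐓}[T(z) = 1] ≥ 1 - ε₃. Let z be a distribution over {-1,1}^n such that the probability over T∼𝐓 that |Pr[T(u)=-1] - Pr[T(z)=-1]| > ε₅ is at most ε₄. Then Pr[z ∈ G] ≥ 1 - (ε₁ + ε₂ + ε₃ + 2ε₄ + ε₅). -/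
open Finset
open scoped Classical

noncomputable section

/-- The probability that a sample from the distribution `p` satisfies `P`. -/
noncomputable def pr {α : Type*} [Fintype α] (p : PMF α) (P : α → Prop) : ℝ :=
  ∑ x, if P x then (p x).toReal else 0

/-- The uniform distribution over `{-1,1}^n`. -/
noncomputable def unif (n : ℕ) : PMF (Fin n → Bool) := PMF.uniformOfFintype _

lemma pr_nonneg {α : Type*} [Fintype α] (p : PMF α) (P : α → Prop) : 0 ≤ pr p P := by
  apply Finset.sum_nonneg; intro x _; split
  · exact ENNReal.toReal_nonneg
  · exact le_rfl

lemma sum_toReal {α : Type*} [Fintype α] (p : PMF α) : ∑ x, (p x).toReal = 1 := by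
  rw [← ENNReal.toReal_sum (fun a _ => p.apply_ne_top a)]
  have h := p.tsum_coe
  rw [tsum_fintype] at h
  rw [h, ENNReal.toReal_one]

lemma pr_le_one {α : Type*} [Fintype α] (p : PMF α) (P : α → Prop) : pr p P ≤ 1 := by
  rw [← sum_toReal p]
  apply Finset.sum_le_sum; intro x _; split
  · exact le_rfl
  · exact ENNReal.toReal_nonneg

lemma pr_compl {α : Type*} [Fintype α] (p : PMF α) (P : α → Prop) :
    pr p P + pr p (fun x => ¬ P x) = 1 := by
  rw [← sum_toReal p, pr, pr, ← Finset.sum_add_distrib]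
  apply Finset.sum_congr rfl; intro x _
  by_cases h : P x <;> simp [h]

lemma pr_congr {α : Type*} [Fintype α] (p : PMF α) {P Q : α → Prop}
    (h : ∀ x, P x ↔ Q x) : pr p P = pr p Q := by
  apply Finset.sum_congr rfl; intro x _
  by_cases hx : P x
  · rw [if_pos hx, if_pos ((h x).mp hx)]
  · rw [if_neg hx, if_neg (fun hq => hx ((h x).mpr hq))]

/-- The "randomized tests" lemma. A test `T : {-1,1}^n → {-1,1}` is modeled as a
Boolean-valued function where the output `true` corresponds to `-1` (acceptance).
If `E ⊆ G ⊆ {-1,1}^n` with `Pr_{uniform}[z ∈ E] ≥ 1 - ε₁`, a random test `T ∼ 𝐓`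
accepts every fixed `z ∈ E` with probability at least `1 - ε₂` and rejects every
fixed `z ∉ G` with probability at least `1 - ε₃`, and a distribution `Z` is
`ε₅`-pseudorandom for all but an `ε₄`-fraction (under `𝐓`) of the tests, then
`Pr[Z ∈ G] ≥ 1 - (ε₁ + ε₂ + ε₃ + 2ε₄ + ε₅)`. -/
theorem randomized_tests
    (n : ℕ) (ε₁ ε₂ ε₃ ε₄ ε₅ : ℝ)
    (hε₁ : 0 < ε₁) (hε₂ : 0 < ε₂) (hε₃ : 0 < ε₃) (hε₄ : 0 < ε₄) (hε₅ : 0 < ε₅)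
    (G E : Set (Fin n → Bool)) (hEG : E ⊆ G)
    (hE : 1 - ε₁ ≤ pr (unif n) (fun z => z ∈ E))
    (T : PMF ((Fin n → Bool) → Bool))
    (hTacc : ∀ z ∈ E, 1 - ε₂ ≤ pr T (fun t => t z = true))
    (hTrej : ∀ z ∉ G, 1 - ε₃ ≤ pr T (fun t => t z = false))
    (Z : PMF (Fin n → Bool))
    (hfool : pr T (fun t =>
        ε₅ < |pr (unif n) (fun x => t x = true) - pr Z (fun x => t x = true)|) ≤ ε₄) :
    1 - (ε₁ + ε₂ + ε₃ + 2 * ε₄ + ε₅) ≤ pr Z (fun z => z ∈ G) := by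
  rcases le_or_gt 1 (ε₁ + ε₂ + ε₃ + 2 * ε₄ + ε₅) with h1 | h1
  · linarith [pr_nonneg Z (fun z => z ∈ G)]
  have hε₂1 : ε₂ < 1 := by linarith
  set pacc : (Fin n → Bool) → ℝ := fun z => pr T (fun t => t z = true) with hpacc
  have hpacc_nonneg : ∀ z, 0 ≤ pacc z := fun z => pr_nonneg _ _
  have hpacc_le : ∀ z, pacc z ≤ 1 := fun z => pr_le_one _ _
  have hpacc_notG : ∀ z ∉ G, pacc z ≤ ε₃ := by
    intro z hz
    have h2 := pr_compl T (fun t => t z = true)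
    have h3 := hTrej z hz
    have h4 : pr T (fun t => ¬ t z = true) = pr T (fun t => t z = false) :=
      pr_congr T (fun t => by simp [Bool.not_eq_true])
    simp only [hpacc]
    linarith [h2, h3, h4]
  -- Fubini
  have fub : ∀ (p : PMF (Fin n → Bool)),
      ∑ t, (T t).toReal * pr p (fun x => t x = true)
        = ∑ z, (p z).toReal * pacc z := by
    intro p
    simp only [hpacc, pr, Finset.mul_sum]
    rw [Finset.sum_comm]
    apply Finset.sum_congr rfl
    intro z _
    apply Finset.sum_congr rfl
    intro t _
    split_ifs <;> ring
  -- lower bound on uniform side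
  have hu : 1 - ε₁ - ε₂ ≤ ∑ z, ((unif n) z).toReal * pacc z := by
    have step1 : ∑ z, (if z ∈ E then ((unif n) z).toReal else 0) * (1 - ε₂)
        ≤ ∑ z, ((unif n) z).toReal * pacc z := by
      apply Finset.sum_le_sum; intro z _
      by_cases hz : z ∈ E
      · rw [if_pos hz]
        exact mul_le_mul_of_nonneg_left (hTacc z hz) ENNReal.toReal_nonneg
      · rw [if_neg hz, zero_mul]
        exact mul_nonneg ENNReal.toReal_nonneg (hpacc_nonneg z)
    have heq : ∑ z, (if z ∈ E then ((unif n) z).toReal else 0) * (1 - ε₂)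
        = pr (unif n) (fun z => z ∈ E) * (1 - ε₂) := by
      rw [pr, Finset.sum_mul]
    rw [heq] at step1
    nlinarith [mul_le_mul_of_nonneg_right hE (by linarith : (0:ℝ) ≤ 1 - ε₂),
      mul_pos hε₁ hε₂]
  -- upper bound on Z side
  have hzub : ∑ z, (Z z).toReal * pacc z ≤ pr Z (fun z => z ∈ G) + ε₃ := by
    have step : ∑ z, (Z z).toReal * pacc z
        ≤ ∑ z, ((if z ∈ G then (Z z).toReal else 0) + (Z z).toReal * ε₃) := by
      apply Finset.sum_le_sum; intro z _
      by_cases hz : z ∈ G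
      · rw [if_pos hz]
        nlinarith [hpacc_le z, (ENNReal.toReal_nonneg : 0 ≤ (Z z).toReal), hε₃.le]
      · rw [if_neg hz, zero_add]
        exact mul_le_mul_of_nonneg_left (hpacc_notG z hz) ENNReal.toReal_nonneg
    rw [Finset.sum_add_distrib] at step
    have h2 : ∑ z, (Z z).toReal * ε₃ = ε₃ := by
      rw [← Finset.sum_mul, sum_toReal, one_mul]
    rw [h2] at step
    exact step
  -- pseudorandomness
  have hps : ∑ t, (T t).toReal * pr (unif n) (fun x => t x = true)
      ≤ ∑ t, (T t).toReal * pr Z (fun x => t x = true) + (ε₄ + ε₅) := by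
    have step : ∑ t, (T t).toReal *
          (pr (unif n) (fun x => t x = true) - pr Z (fun x => t x = true))
        ≤ ∑ t, ((if ε₅ < |pr (unif n) (fun x => t x = true)
              - pr Z (fun x => t x = true)| then (T t).toReal else 0)
            + (T t).toReal * ε₅) := by
      apply Finset.sum_le_sum; intro t _
      by_cases hb : ε₅ < |pr (unif n) (fun x => t x = true) - pr Z (fun x => t x = true)|
      · rw [if_pos hb]
        have hd1 : pr (unif n) (fun x => t x = true) - pr Z (fun x => t x = true) ≤ 1 := by
          have := pr_le_one (unif n) (fun x => t x = true)
          have := pr_nonneg Z (fun x => t x = true)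
          linarith
        nlinarith [(ENNReal.toReal_nonneg : 0 ≤ (T t).toReal), hε₅.le]
      · rw [if_neg hb, zero_add]
        have hd : pr (unif n) (fun x => t x = true) - pr Z (fun x => t x = true) ≤ ε₅ :=
          le_trans (le_abs_self _) (not_lt.mp hb)
        exact mul_le_mul_of_nonneg_left hd ENNReal.toReal_nonneg
    rw [Finset.sum_add_distrib] at step
    have h2 : ∑ t, (T t).toReal * ε₅ = ε₅ := by
      rw [← Finset.sum_mul, sum_toReal, one_mul]
    have h3 : (∑ t, if ε₅ < |pr (unif n) (fun x => t x = true)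
          - pr Z (fun x => t x = true)| then (T t).toReal else 0)
        = pr T (fun t => ε₅ < |pr (unif n) (fun x => t x = true)
          - pr Z (fun x => t x = true)|) := rfl
    rw [h2, h3] at step
    have h4 : ∑ t, (T t).toReal *
          (pr (unif n) (fun x => t x = true) - pr Z (fun x => t x = true))
        = ∑ t, (T t).toReal * pr (unif n) (fun x => t x = true)
          - ∑ t, (T t).toReal * pr Z (fun x => t x = true) := by
      rw [← Finset.sum_sub_distrib]
      apply Finset.sum_congr rfl; intro t _; ring
    rw [h4] at step
    linarith [hfool]
  rw [fub (unif n), fub Z] at hps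
  linarith [hu, hzub, hps, hε₄]

end
end

section
/- Let f : {0,1}^n × {0,1}^t → {0,1}^m be an averaging sampler with accuracy ε and error δ. Then f is an (n - log(ε/δ), 2ε)-extractor. -/
open Finset
open scoped Classical

/-- If `f : {0,1}^n × {0,1}^t → {0,1}^m` is an averaging sampler with accuracy `ε`
and error `δ` (for every `T ⊆ {0,1}^m`, at most a `δ`-fraction of the `x`'s have
empirical estimate `Pr_z[f(x,z) ∈ T]` deviating from `|T|/2^m` by more than `ε`),
then `f` is an `(n - log(ε/δ), 2ε)`-extractor: for every source `X` with
min-entropy at least `n - log₂(ε/δ)` — i.e. `X x ≤ (ε/δ)·2^{-n}` pointwise — the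
distribution `f(X,U_t)` is `2ε`-close to uniform in statistical distance. -/
theorem averaging_sampler_implies_extractor
    (n t m : ℕ) (ε δ : ℝ) (hε : 0 < ε) (hδ : 0 < δ)
    (f : (Fin n → Bool) → (Fin t → Bool) → (Fin m → Bool))
    (hsamp : ∀ T : Finset (Fin m → Bool),
      ((((univ : Finset (Fin n → Bool))).filter (fun x =>
          ¬ |(((univ : Finset (Fin t → Bool)).filter (fun z => f x z ∈ T)).card : ℝ) / 2 ^ t
              - (T.card : ℝ) / 2 ^ m| ≤ ε)).card : ℝ)
        ≤ δ * 2 ^ n) :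
    ∀ X : PMF (Fin n → Bool),
      (∀ x, (X x).toReal ≤ (ε / δ) * (2 : ℝ) ^ (-(n : ℤ))) →
      ∀ T : Finset (Fin m → Bool),
        |(∑ x : Fin n → Bool, ∑ z : Fin t → Bool,
            (X x).toReal * (if f x z ∈ T then (1 : ℝ) else 0) / 2 ^ t)
          - (T.card : ℝ) / 2 ^ m| ≤ 2 * ε := by
  intro X hX T
  set μ : ℝ := (T.card : ℝ) / 2 ^ m with hμ
  set p : (Fin n → Bool) → ℝ := fun x =>
    (((univ : Finset (Fin t → Bool)).filter (fun z => f x z ∈ T)).card : ℝ) / 2 ^ t with hp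
  have h2t : (0:ℝ) < 2 ^ t := by positivity
  have h2m : (0:ℝ) < 2 ^ m := by positivity
  have hXnn : ∀ x, 0 ≤ (X x).toReal := fun x => ENNReal.toReal_nonneg
  -- inner sum
  have hinner : ∀ x, (∑ z : Fin t → Bool,
      (X x).toReal * (if f x z ∈ T then (1 : ℝ) else 0) / 2 ^ t) = (X x).toReal * p x := by
    intro x
    have : ∀ z : Fin t → Bool, (X x).toReal * (if f x z ∈ T then (1 : ℝ) else 0) / 2 ^ t
        = (if f x z ∈ T then ((X x).toReal / 2 ^ t) else 0) := by
      intro z; split <;> simp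
    rw [Finset.sum_congr rfl fun z _ => this z, Finset.sum_ite, Finset.sum_const,
      Finset.sum_const_zero, add_zero, nsmul_eq_mul]
    simp only [hp]
    ring
  -- sum of X = 1
  have hsum1 : (∑ x : Fin n → Bool, (X x).toReal) = 1 := by
    have := X.tsum_coe
    rw [tsum_fintype] at this
    have h2 : (∑ x : Fin n → Bool, (X x).toReal) = ((∑ x : Fin n → Bool, X x)).toReal := by
      rw [ENNReal.toReal_sum (fun x _ => X.apply_ne_top x)]
    rw [h2, this, ENNReal.toReal_one]
  have hpm : ∀ x, 0 ≤ p x ∧ p x ≤ 1 := by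
    intro x
    constructor
    · positivity
    · rw [hp, div_le_one h2t]
      have := Finset.card_filter_le (univ : Finset (Fin t → Bool)) (fun z => f x z ∈ T)
      simp only [Finset.card_univ, Fintype.card_fun, Fintype.card_bool, Fintype.card_fin] at this
      exact_mod_cast this
  have hμm : 0 ≤ μ ∧ μ ≤ 1 := by
    constructor
    · positivity
    · rw [hμ, div_le_one h2m]
      have := Finset.card_le_univ T
      simp only [Finset.card_univ, Fintype.card_fun, Fintype.card_bool, Fintype.card_fin] at this
      exact_mod_cast this
  have habs1 : ∀ x, |p x - μ| ≤ 1 := by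
    intro x
    rw [abs_sub_le_iff]
    constructor <;> linarith [(hpm x).1, (hpm x).2, hμm.1, hμm.2]
  rw [Finset.sum_congr rfl fun x _ => hinner x]
  have key : (∑ x : Fin n → Bool, (X x).toReal * p x) - μ
      = ∑ x : Fin n → Bool, (X x).toReal * (p x - μ) := by
    simp only [mul_sub, Finset.sum_sub_distrib, ← Finset.sum_mul, hsum1, one_mul]
  rw [key]
  calc |∑ x : Fin n → Bool, (X x).toReal * (p x - μ)|
      ≤ ∑ x : Fin n → Bool, |(X x).toReal * (p x - μ)| := Finset.abs_sum_le_sum_abs _ _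
    _ = ∑ x : Fin n → Bool, (X x).toReal * |p x - μ| := by
        refine Finset.sum_congr rfl fun x _ => ?_
        rw [abs_mul, abs_of_nonneg (hXnn x)]
    _ ≤ 2 * ε := by
        set B := (univ : Finset (Fin n → Bool)).filter (fun x => ¬ |p x - μ| ≤ ε) with hB
        rw [← Finset.sum_filter_add_sum_filter_not univ (fun x => ¬ |p x - μ| ≤ ε)]
        have hbad : (∑ x ∈ B, (X x).toReal * |p x - μ|) ≤ ε := by
          calc (∑ x ∈ B, (X x).toReal * |p x - μ|)
              ≤ ∑ x ∈ B, (ε / δ) * (2 : ℝ) ^ (-(n : ℤ)) := by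
                refine Finset.sum_le_sum fun x _ => ?_
                calc (X x).toReal * |p x - μ| ≤ (X x).toReal * 1 :=
                      mul_le_mul_of_nonneg_left (habs1 x) (hXnn x)
                  _ = (X x).toReal := mul_one _
                  _ ≤ _ := hX x
            _ = (B.card : ℝ) * ((ε / δ) * (2 : ℝ) ^ (-(n : ℤ))) := by
                rw [Finset.sum_const, nsmul_eq_mul]
            _ ≤ (δ * 2 ^ n) * ((ε / δ) * (2 : ℝ) ^ (-(n : ℤ))) := by
                have hpos : (0:ℝ) ≤ (ε / δ) * (2 : ℝ) ^ (-(n : ℤ)) := by positivity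
                exact mul_le_mul_of_nonneg_right (hsamp T) hpos
            _ = ε := by
                rw [zpow_neg, zpow_natCast]
                field_simp
        have hgood : (∑ x ∈ univ.filter (fun x => ¬¬ |p x - μ| ≤ ε), (X x).toReal * |p x - μ|)
            ≤ ε := by
          calc (∑ x ∈ univ.filter (fun x => ¬¬ |p x - μ| ≤ ε), (X x).toReal * |p x - μ|)
              ≤ ∑ x ∈ univ.filter (fun x => ¬¬ |p x - μ| ≤ ε), (X x).toReal * ε := by
                refine Finset.sum_le_sum fun x hx => ?_
                have hx' := (Finset.mem_filter.mp hx).2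
                rw [not_not] at hx'
                exact mul_le_mul_of_nonneg_left hx' (hXnn x)
            _ = (∑ x ∈ univ.filter (fun x => ¬¬ |p x - μ| ≤ ε), (X x).toReal) * ε := by
                rw [← Finset.sum_mul]
            _ ≤ 1 * ε := by
                refine mul_le_mul_of_nonneg_right ?_ hε.le
                rw [← hsum1]
                exact Finset.sum_le_sum_of_subset_of_nonneg (Finset.filter_subset _ _)
                  (fun x _ _ => hXnn x)
            _ = ε := one_mul ε
        linarith
end

section
/- Let w ∈ ℝ^n be a vector whose μ-critical index exceeds k (with coordinates sorted so |w₁| ≥ ... ≥ |w_n|). Then for every 1 ≤ i < j ≤ k it holds that |w_j| ≤ ‖w_{≥j}‖₂ ≤ (1-μ²)^{(j-i)/2}·‖w_{≥i}‖₂ ≤ (1-μ²)^{(j-i)/2}·|w_i|/μ. -/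
open Finset
open scoped Classical

/-- Servedio's lemma on exponential weight decay below the critical index.
Weights are given as `w : ℕ → ℝ`, sorted in decreasing magnitude on `[0,n)`
(0-indexed; the paper's `w_i` is `w (i-1)`). The hypothesis that the `μ`-critical
index of `w` exceeds `k` is expressed by: for every `i ≤ k` (1-indexed), the tail
`w_{>i-1}` (0-indexed: `Finset.Ico (i-1) n`) is not `μ`-regular, equivalently
`|w_i| > μ·‖w_{≥i}‖₂`. Then for every `1 ≤ i < j ≤ k` (with `j ≤ n`):
`|w_j| ≤ ‖w_{≥j}‖₂ ≤ (1-μ²)^{(j-i)/2}·‖w_{≥i}‖₂ ≤ (1-μ²)^{(j-i)/2}·|w_i|/μ`. -/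
theorem servedio_weight_decay
    (n k : ℕ) (μ : ℝ) (hμ : 0 < μ)
    (w : ℕ → ℝ)
    (hsort : ∀ a b : ℕ, a ≤ b → b < n → |w b| ≤ |w a|)
    (hcrit : ∀ h : ℕ, h < k →
      ¬ (∀ l ∈ Finset.Ico h n,
          |w l| ≤ μ * Real.sqrt (∑ l' ∈ Finset.Ico h n, w l' ^ 2)))
    (i j : ℕ) (h1i : 1 ≤ i) (hij : i < j) (hjk : j ≤ k) (hjn : j ≤ n) :
    |w (j - 1)| ≤ Real.sqrt (∑ l ∈ Finset.Ico (j - 1) n, w l ^ 2) ∧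
    Real.sqrt (∑ l ∈ Finset.Ico (j - 1) n, w l ^ 2)
      ≤ (1 - μ ^ 2) ^ (((j : ℝ) - (i : ℝ)) / 2) *
          Real.sqrt (∑ l ∈ Finset.Ico (i - 1) n, w l ^ 2) ∧
    (1 - μ ^ 2) ^ (((j : ℝ) - (i : ℝ)) / 2) *
        Real.sqrt (∑ l ∈ Finset.Ico (i - 1) n, w l ^ 2)
      ≤ (1 - μ ^ 2) ^ (((j : ℝ) - (i : ℝ)) / 2) * |w (i - 1)| / μ := by
  set S : ℕ → ℝ := fun h => ∑ l ∈ Finset.Ico h n, w l ^ 2 with hSdef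
  have hSnn : ∀ h, 0 ≤ S h := fun h => Finset.sum_nonneg fun l _ => sq_nonneg _
  have key : ∀ h, h < k → h < n ∧ μ * Real.sqrt (S h) < |w h| := by
    intro h hk
    have := hcrit h hk
    push_neg at this
    obtain ⟨l, hl, hlt⟩ := this
    rw [Finset.mem_Ico] at hl
    exact ⟨lt_of_le_of_lt hl.1 hl.2, lt_of_lt_of_le hlt (hsort h l hl.1 hl.2)⟩
  have hwsq : ∀ h, h < n → w h ^ 2 ≤ S h := fun h hn =>
    Finset.single_le_sum (f := fun l => w l ^ 2) (fun l _ => sq_nonneg _)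
      (Finset.mem_Ico.mpr ⟨le_refl _, hn⟩)
  have keysq : ∀ h, h < k → μ ^ 2 * S h < w h ^ 2 := by
    intro h hk
    obtain ⟨hn, hlt⟩ := key h hk
    have h0 : 0 ≤ μ * Real.sqrt (S h) := mul_nonneg hμ.le (Real.sqrt_nonneg _)
    calc μ ^ 2 * S h = (μ * Real.sqrt (S h)) * (μ * Real.sqrt (S h)) := by
          rw [mul_mul_mul_comm, Real.mul_self_sqrt (hSnn h)]; ring
      _ < |w h| * |w h| := mul_self_lt_mul_self h0 hlt
      _ = w h ^ 2 := by rw [← sq, sq_abs]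
  have hμ1 : μ ^ 2 < 1 := by
    have hk0 : 0 < k := by omega
    have h1 := keysq 0 hk0
    have h2 := hwsq 0 (key 0 hk0).1
    have hS0 : 0 < S 0 := by nlinarith [hSnn 0]
    nlinarith
  have hb0 : (0:ℝ) ≤ 1 - μ ^ 2 := by linarith
  have hsplit : ∀ h, h < n → S h = w h ^ 2 + S (h + 1) := by
    intro h hn
    simp only [hSdef]
    exact Finset.sum_eq_sum_Ico_succ_bot hn _
  have hstep : ∀ h, h < k → S (h + 1) ≤ (1 - μ ^ 2) * S h := by
    intro h hk
    have h1 := keysq h hk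
    have h2 := hsplit h (key h hk).1
    nlinarith
  have iter : ∀ m, (i - 1) + m ≤ k → S ((i - 1) + m) ≤ (1 - μ ^ 2) ^ m * S (i - 1) := by
    intro m
    induction m with
    | zero => intro _; simp
    | succ m ih =>
      intro hm
      have h1 : (i - 1) + m < k := by omega
      calc S ((i - 1) + (m + 1)) = S (((i - 1) + m) + 1) := by ring_nf
        _ ≤ (1 - μ ^ 2) * S ((i - 1) + m) := hstep _ h1
        _ ≤ (1 - μ ^ 2) * ((1 - μ ^ 2) ^ m * S (i - 1)) := by
            exact mul_le_mul_of_nonneg_left (ih (by omega)) hb0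
        _ = (1 - μ ^ 2) ^ (m + 1) * S (i - 1) := by ring
  have hmain : S (j - 1) ≤ (1 - μ ^ 2) ^ (j - i) * S (i - 1) := by
    have := iter (j - i) (by omega)
    have heq : (i - 1) + (j - i) = j - 1 := by omega
    rwa [heq] at this
  -- translate the natural power to rpow
  have hrw : (1 - μ ^ 2) ^ (((j : ℝ) - (i : ℝ)) / 2)
      = Real.sqrt ((1 - μ ^ 2) ^ (j - i)) := by
    have : ((j : ℝ) - (i : ℝ)) = ((j - i : ℕ) : ℝ) := by
      push_cast [Nat.cast_sub hij.le]; ring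
    rw [this, Real.sqrt_eq_rpow, ← Real.rpow_natCast (1 - μ ^ 2) (j - i),
      ← Real.rpow_mul hb0, mul_one_div]
  have hpow_nn : (0:ℝ) ≤ (1 - μ ^ 2) ^ (((j : ℝ) - (i : ℝ)) / 2) := by
    rw [hrw]; exact Real.sqrt_nonneg _
  refine ⟨?_, ?_, ?_⟩
  · have := hwsq (j - 1) (by omega)
    calc |w (j - 1)| = Real.sqrt (w (j - 1) ^ 2) := (Real.sqrt_sq_eq_abs _).symm
      _ ≤ Real.sqrt (S (j - 1)) := Real.sqrt_le_sqrt this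
  · calc Real.sqrt (S (j - 1)) ≤ Real.sqrt ((1 - μ ^ 2) ^ (j - i) * S (i - 1)) :=
        Real.sqrt_le_sqrt hmain
      _ = (1 - μ ^ 2) ^ (((j : ℝ) - (i : ℝ)) / 2) * Real.sqrt (S (i - 1)) := by
        rw [Real.sqrt_mul (by positivity), hrw]
  · have hik : i - 1 < k := by omega
    have h3 : Real.sqrt (S (i - 1)) ≤ |w (i - 1)| / μ := by
      rw [le_div_iff₀ hμ]
      have := (key (i - 1) hik).2
      nlinarith [Real.sqrt_nonneg (S (i - 1))]
    rw [mul_div_assoc]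
    exact mul_le_mul_of_nonneg_left h3 hpow_nn
end

section
/- Let Φ(x) = sgn(Σ_{i∈[n]} x_i) be the majority function and let p = n^{-Ω(1)}. Let ρ ∼ R_p be a random restriction in which each variable independently stays alive with probability p and is otherwise fixed to a uniform random bit. Then for every t ≥ 1, with probability at least 1 - O(t·√p) over ρ, the restricted function Φ↾ρ is t-imbalanced. -/
open Finset
open scoped Classical

noncomputable section

/-- `pm b` maps a Boolean to the corresponding element of `{-1,1} ⊆ ℝ`. -/
def pm (b : Bool) : ℝ := if b then 1 else -1

lemma centralBinom_sq_bound (r : ℕ) :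
    ((Nat.centralBinom r : ℝ))^2 * (2*r+1) ≤ 16^r := by
  induction r with
  | zero => simp [Nat.centralBinom]
  | succ r ih =>
    have hrecR : ((r:ℝ)+1) * (Nat.centralBinom (r+1) : ℝ)
        = 2 * (2*r+1) * Nat.centralBinom r := by
      exact_mod_cast congrArg (fun k : ℕ => (k : ℝ)) (Nat.succ_mul_centralBinom_succ r)
    set a := (Nat.centralBinom r : ℝ) with ha
    set b := (Nat.centralBinom (r+1) : ℝ) with hb
    have hsq : (((r:ℝ)+1) * b)^2 = (2 * (2*(r:ℝ)+1) * a)^2 := by rw [hrecR]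
    have key : (b^2 * (2*((r:ℝ)+1)+1)) * (((r:ℝ)+1)^2) ≤ 16^(r+1) * (((r:ℝ)+1)^2) := by
      have e1 : (b^2 * (2*((r:ℝ)+1)+1)) * (((r:ℝ)+1)^2)
          = 4*(2*(r:ℝ)+1)*(2*(r:ℝ)+3) * (a^2*(2*(r:ℝ)+1)) := by
        have : (((r:ℝ)+1) * b)^2 * (2*(r:ℝ)+3) = (2 * (2*(r:ℝ)+1) * a)^2 * (2*(r:ℝ)+3) := by
          rw [hsq]
        nlinarith [this]
      rw [e1]
      calc 4*(2*(r:ℝ)+1)*(2*(r:ℝ)+3) * (a^2*(2*(r:ℝ)+1))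
          ≤ 4*(2*(r:ℝ)+1)*(2*(r:ℝ)+3) * 16^r := by
            apply mul_le_mul_of_nonneg_left _ (by positivity)
            exact_mod_cast ih
        _ ≤ 16^(r+1) * (((r:ℝ)+1)^2) := by
            rw [pow_succ]
            nlinarith [pow_pos (show (0:ℝ) < 16 by norm_num) r]
    have h2 := le_of_mul_le_mul_right key (by positivity)
    calc b^2 * (2*((r+1:ℕ):ℝ)+1) = b^2 * (2*((r:ℝ)+1)+1) := by push_cast; ring
      _ ≤ 16^(r+1) := h2

lemma centralBinom_bound (r : ℕ) :
    (Nat.centralBinom r : ℝ) * Real.sqrt (2*r+1) ≤ 4^r := by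
  have h1 : (0:ℝ) ≤ (Nat.centralBinom r : ℝ) * Real.sqrt (2*r+1) := by positivity
  have h2 : ((Nat.centralBinom r : ℝ) * Real.sqrt (2*r+1))^2 ≤ ((4:ℝ)^r)^2 := by
    rw [mul_pow, Real.sq_sqrt (by positivity)]
    calc (Nat.centralBinom r : ℝ)^2 * (2*↑r+1) ≤ 16^r := centralBinom_sq_bound r
    _ = ((4:ℝ)^r)^2 := by rw [← pow_mul, mul_comm, pow_mul]; norm_num
  have := Real.sqrt_le_sqrt h2
  rwa [Real.sqrt_sq h1, Real.sqrt_sq (by positivity)] at this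

lemma choose_bound (m k : ℕ) :
    (m.choose k : ℝ) * Real.sqrt (m+1) ≤ 2^m := by
  have hmid : (m.choose k : ℝ) ≤ (m.choose (m/2) : ℝ) := by
    exact_mod_cast Nat.choose_le_middle k m
  have hs : (0:ℝ) ≤ Real.sqrt (m+1) := Real.sqrt_nonneg _
  refine le_trans (mul_le_mul_of_nonneg_right hmid hs) ?_
  rcases Nat.even_or_odd m with ⟨r, hr⟩ | ⟨r, hr⟩
  · subst hr
    have h2 : (r + r)/2 = r := by omega
    rw [h2]
    have := centralBinom_bound r
    have e : (Nat.centralBinom r : ℝ) = ((r+r).choose r : ℝ) := by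
      rw [Nat.centralBinom]; norm_cast; rw [two_mul]
    rw [e] at this
    calc ((r+r).choose r : ℝ) * Real.sqrt ((r+r : ℕ)+1)
        = ((r+r).choose r : ℝ) * Real.sqrt (2*r+1) := by push_cast; ring_nf
      _ ≤ 4^r := this
      _ = 2^(r+r) := by rw [show (4:ℝ) = 2^2 by norm_num, ← pow_mul]; ring_nf
  · subst hr
    have h2 : (2*r+1)/2 = r := by omega
    rw [h2]
    -- 2 * choose (2r+1) r = centralBinom (r+1)
    have hdouble : 2 * (2*r+1).choose r = Nat.centralBinom (r+1) := by
      have h1 : Nat.centralBinom (r+1) = (2*r+2).choose (r+1) := by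
        rw [Nat.centralBinom]; ring_nf
      have h2' : (2*r+2).choose (r+1) = (2*r+1).choose r + (2*r+1).choose (r+1) := by
        have := Nat.succ_sub_one (2*r+2)
        have := Nat.choose_succ_succ (2*r+1) r
        simpa [Nat.succ_eq_add_one, show 2*r+1+1 = 2*r+2 by ring] using this
      have h3 : (2*r+1).choose (r+1) = (2*r+1).choose r := by
        rw [← Nat.choose_symm (by omega : r+1 ≤ 2*r+1)]
        congr 1; omega
      omega
    have hcb := centralBinom_bound (r+1)
    have : (2:ℝ) * ((2*r+1).choose r : ℝ) * Real.sqrt (2*(r+1)+1) ≤ 4^(r+1) := by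
      calc (2:ℝ) * ((2*r+1).choose r : ℝ) * Real.sqrt (2*(r+1)+1)
          = (Nat.centralBinom (r+1) : ℝ) * Real.sqrt (2*(r+1)+1) := by
            rw [← hdouble]; push_cast; ring
        _ ≤ 4^(r+1) := by push_cast at hcb; exact hcb
    have hmono : Real.sqrt ((2*r+1 : ℕ)+1) ≤ Real.sqrt (2*((r:ℝ)+1)+1) := by
      apply Real.sqrt_le_sqrt; push_cast; linarith
    calc ((2*r+1).choose r : ℝ) * Real.sqrt ((2*r+1 : ℕ)+1)
        ≤ ((2*r+1).choose r : ℝ) * Real.sqrt (2*((r:ℝ)+1)+1) :=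
          mul_le_mul_of_nonneg_left hmono (by positivity)
      _ ≤ 4^(r+1)/2 := by push_cast at this ⊢; linarith
      _ = 2^(2*r+1) := by
          rw [show (4:ℝ) = 2^2 by norm_num, ← pow_mul,
            show 2*(r+1) = (2*r+1)+1 by ring, pow_succ]
          ring

lemma count_interval (m : ℕ) (lam : ℝ) (hlam : 0 ≤ lam) :
    (((Finset.range (m+1)).filter (fun k : ℕ => |2*(k:ℝ) - (m:ℝ)| ≤ lam)).card : ℝ) ≤ lam + 1 := by
  set K := (Finset.range (m+1)).filter (fun k : ℕ => |2*(k:ℝ) - (m:ℝ)| ≤ lam) with hK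
  set a : ℝ := ((m:ℝ) - lam)/2
  set b : ℝ := ((m:ℝ) + lam)/2
  have hmem : ∀ k ∈ K, (⌈a⌉ : ℤ) ≤ (k:ℤ) ∧ (k:ℤ) ≤ ⌊b⌋ := by
    intro k hk
    simp only [hK, mem_filter, mem_range, abs_le] at hk
    obtain ⟨-, h1, h2⟩ := hk
    constructor
    · exact Int.ceil_le.2 (by push_cast; unfold a; linarith)
    · exact Int.le_floor.2 (by push_cast; unfold b; linarith)
  have hsub : K.image (fun k : ℕ => (k:ℤ)) ⊆ Finset.Icc ⌈a⌉ ⌊b⌋ := by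
    intro x hx
    simp only [mem_image] at hx
    obtain ⟨k, hk, rfl⟩ := hx
    exact Finset.mem_Icc.2 (hmem k hk)
  have hcard : K.card = (K.image (fun k : ℕ => (k:ℤ))).card :=
    (Finset.card_image_of_injective _ (fun x y h => by exact_mod_cast h)).symm
  have h2 : (K.card : ℝ) ≤ ((Finset.Icc ⌈a⌉ ⌊b⌋).card : ℝ) := by
    rw [hcard]; exact_mod_cast Finset.card_le_card hsub
  refine h2.trans ?_
  rw [Int.card_Icc]
  have hfl : (⌊b⌋ : ℝ) ≤ b := Int.floor_le b
  have hcl : a ≤ (⌈a⌉ : ℝ) := Int.le_ceil a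
  rcases le_or_gt (⌈a⌉ : ℤ) ⌊b⌋ with h | h
  · have hnn : (0:ℤ) ≤ ⌊b⌋ + 1 - ⌈a⌉ := by omega
    have e : ((⌊b⌋ + 1 - ⌈a⌉).toNat : ℝ) = (⌊b⌋ : ℝ) + 1 - (⌈a⌉ : ℝ) := by
      have h' := Int.toNat_of_nonneg hnn
      exact_mod_cast congrArg (fun x : ℤ => (x:ℝ)) h'
    rw [e]
    have hba : b - a = lam := by unfold a b; ring
    linarith
  · have h0 : (⌊b⌋ + 1 - ⌈a⌉).toNat = 0 := by omega
    rw [h0]; norm_num; linarith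

lemma fiber_card (n : ℕ) (F : Finset (Fin n)) (T : Finset (Fin n)) (hT : T ⊆ F) :
    ((Finset.univ.filter (fun z : Fin n → Bool => F.filter (fun i => z i) = T)).card : ℕ)
      = 2^(n - F.card) := by
  have he : Finset.univ.filter (fun z : Fin n → Bool => F.filter (fun i => z i) = T)
      = Fintype.piFinset (fun i => if i ∈ F then {decide (i ∈ T)} else Finset.univ) := by
    ext z
    simp only [mem_filter, mem_univ, true_and, Fintype.mem_piFinset]
    constructor
    · intro h i
      by_cases hi : i ∈ F
      · simp only [hi, if_pos, Finset.mem_singleton]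
        by_cases hit : i ∈ T
        · have : i ∈ F.filter (fun i => z i) := h ▸ hit
          simp only [mem_filter] at this
          simp [hit, this.2]
        · have : i ∉ F.filter (fun i => z i) := h ▸ hit
          simp only [mem_filter, not_and] at this
          simp [hit, this hi]
      · simp [hi]
    · intro h
      ext i
      simp only [mem_filter]
      constructor
      · rintro ⟨hiF, hzi⟩
        have := h i
        simp only [hiF, if_pos, Finset.mem_singleton] at this
        by_contra hit
        simp [hit, hzi] at this
      · intro hit
        refine ⟨hT hit, ?_⟩
        have := h i
        simp only [hT hit, if_pos, Finset.mem_singleton, hit] at this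
        simp [this]
  rw [he, Fintype.card_piFinset]
  rw [← Finset.prod_filter_mul_prod_filter_not Finset.univ (· ∈ F)]
  have h1 : ∀ i ∈ Finset.univ.filter (· ∈ F),
      ((if i ∈ F then ({decide (i ∈ T)} : Finset Bool) else Finset.univ)).card = 1 := by
    intro i hi; simp only [mem_filter] at hi; simp [hi.2]
  have h2 : ∀ i ∈ Finset.univ.filter (¬ · ∈ F),
      ((if i ∈ F then ({decide (i ∈ T)} : Finset Bool) else Finset.univ)).card = 2 := by
    intro i hi; simp only [mem_filter] at hi; simp [hi.2]
  rw [Finset.prod_congr rfl h1, Finset.prod_congr rfl h2]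
  simp only [Finset.prod_const, one_pow, one_mul]
  congr 1
  rw [Finset.filter_not, Finset.card_sdiff_of_subset (Finset.filter_subset _ _)]
  congr 1
  · simp
  · rw [Finset.filter_univ_mem]  -- maybe wrong name

lemma sum_pm_eq (n : ℕ) (F : Finset (Fin n)) (z : Fin n → Bool) :
    ∑ i ∈ F, pm (z i) = 2 * ((F.filter (fun i => z i)).card : ℝ) - F.card := by
  rw [← Finset.sum_filter_add_sum_filter_not F (fun i => z i)]
  have h1 : ∑ i ∈ F.filter (fun i => z i), pm (z i)
      = ((F.filter (fun i => z i)).card : ℝ) := by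
    rw [Finset.sum_congr rfl (fun i hi => ?_), Finset.sum_const, nsmul_eq_mul, mul_one]
    simp only [mem_filter] at hi; simp [pm, hi.2]
  have h2 : ∑ i ∈ F.filter (fun i => ¬ z i), pm (z i)
      = -((F.filter (fun i => ¬ z i)).card : ℝ) := by
    rw [Finset.sum_congr rfl (fun i hi => ?_), Finset.sum_const, nsmul_eq_mul, mul_neg_one]
    simp only [mem_filter] at hi; simp [pm, hi.2]
  rw [h1, h2]
  have := Finset.card_filter_add_card_filter_not (s := F) (p := fun i => z i = true)
  have h3 : ((F.filter (fun i => z i)).card : ℝ) + ((F.filter (fun i => ¬ z i = true)).card : ℝ)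
      = (F.card : ℝ) := by exact_mod_cast congrArg (fun k : ℕ => (k:ℝ)) this
  push_cast at h3 ⊢
  linarith [h3]

lemma count_balanced (n : ℕ) (F : Finset (Fin n)) (lam : ℝ) (hlam : 0 ≤ lam) :
    ((Finset.univ.filter
        (fun z : Fin n → Bool => |∑ i ∈ F, pm (z i)| ≤ lam)).card : ℝ)
        * Real.sqrt ((F.card : ℝ) + 1) ≤ (lam + 1) * 2^n := by
  set m := F.card with hm
  have hmn : m ≤ n := by rw [hm]; simpa using Finset.card_le_card (Finset.subset_univ F)
  set B := Finset.univ.filter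
      (fun z : Fin n → Bool => |∑ i ∈ F, pm (z i)| ≤ lam) with hB
  set P := F.powerset.filter (fun T => |2*(T.card:ℝ) - (m:ℝ)| ≤ lam) with hP
  -- step 1 : B.card = P.card * 2^(n-m)
  have hmap : ∀ z ∈ B, F.filter (fun i => z i) ∈ P := by
    intro z hz
    simp only [hB, mem_filter, mem_univ, true_and] at hz
    simp only [hP, mem_filter, Finset.mem_powerset]
    refine ⟨Finset.filter_subset _ _, ?_⟩
    rw [sum_pm_eq] at hz
    exact hz
  have hcardB : B.card = ∑ T ∈ P, (B.filter (fun z => F.filter (fun i => z i) = T)).card :=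
    Finset.card_eq_sum_card_fiberwise hmap
  have hfib : ∀ T ∈ P, (B.filter (fun z => F.filter (fun i => z i) = T)).card = 2^(n-m) := by
    intro T hT
    simp only [hP, mem_filter, Finset.mem_powerset] at hT
    rw [← fiber_card n F T hT.1]
    congr 1
    ext z
    simp only [hB, mem_filter, mem_univ, true_and]
    constructor
    · rintro ⟨-, h⟩; exact h
    · intro h
      refine ⟨?_, h⟩
      rw [sum_pm_eq, h]
      exact hT.2
  have hBcard : (B.card : ℝ) = (P.card : ℝ) * 2^(n-m) := by
    rw [hcardB, Finset.sum_congr rfl hfib, Finset.sum_const, nsmul_eq_mul]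
    push_cast; ring
  -- step 2 : P.card ≤ ∑_{k ∈ K} choose m k
  set K := (Finset.range (m+1)).filter (fun k : ℕ => |2*(k:ℝ) - (m:ℝ)| ≤ lam) with hKdef
  have hPmap : ∀ T ∈ P, T.card ∈ K := by
    intro T hT
    simp only [hP, mem_filter, Finset.mem_powerset] at hT
    simp only [hKdef, mem_filter, Finset.mem_range]
    exact ⟨Nat.lt_succ_of_le (hm ▸ Finset.card_le_card hT.1), hT.2⟩
  have hPcard : P.card = ∑ k ∈ K, (P.filter (fun T => T.card = k)).card :=
    Finset.card_eq_sum_card_fiberwise hPmap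
  have hPk : ∀ k ∈ K, (P.filter (fun T => T.card = k)).card ≤ m.choose k := by
    intro k hk
    have hsub : P.filter (fun T => T.card = k) ⊆ Finset.powersetCard k F := by
      intro T hT
      simp only [hP, mem_filter, Finset.mem_powerset] at hT
      rw [Finset.mem_powersetCard]
      exact ⟨hT.1.1, hT.2⟩
    calc (P.filter (fun T => T.card = k)).card ≤ (Finset.powersetCard k F).card :=
        Finset.card_le_card hsub
      _ = m.choose k := by rw [Finset.card_powersetCard]
  -- combine
  have hchoose : ∀ k ∈ K, ((m.choose k : ℕ) : ℝ) * Real.sqrt ((m:ℝ)+1) ≤ 2^m := by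
    intro k _; exact_mod_cast choose_bound m k
  have hsqrtpos : (0:ℝ) ≤ Real.sqrt ((m:ℝ)+1) := Real.sqrt_nonneg _
  have hPbound : (P.card : ℝ) * Real.sqrt ((m:ℝ)+1) ≤ (lam + 1) * 2^m := by
    have h1 : (P.card : ℝ) ≤ ∑ k ∈ K, ((m.choose k : ℕ) : ℝ) := by
      rw [hPcard]
      push_cast
      exact Finset.sum_le_sum (fun k hk => by exact_mod_cast hPk k hk)
    calc (P.card : ℝ) * Real.sqrt ((m:ℝ)+1)
        ≤ (∑ k ∈ K, ((m.choose k : ℕ) : ℝ)) * Real.sqrt ((m:ℝ)+1) :=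
          mul_le_mul_of_nonneg_right h1 hsqrtpos
      _ = ∑ k ∈ K, ((m.choose k : ℕ) : ℝ) * Real.sqrt ((m:ℝ)+1) := by rw [Finset.sum_mul]
      _ ≤ ∑ k ∈ K, (2:ℝ)^m := Finset.sum_le_sum hchoose
      _ = (K.card : ℝ) * 2^m := by rw [Finset.sum_const, nsmul_eq_mul]
      _ ≤ (lam + 1) * 2^m := by
          apply mul_le_mul_of_nonneg_right (count_interval m lam hlam) (by positivity)
  calc (B.card : ℝ) * Real.sqrt ((m:ℝ)+1)
      = ((P.card : ℝ) * Real.sqrt ((m:ℝ)+1)) * 2^(n-m) := by rw [hBcard]; ring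
    _ ≤ ((lam+1) * 2^m) * 2^(n-m) := by
        apply mul_le_mul_of_nonneg_right hPbound (by positivity)
    _ = (lam + 1) * 2^n := by
        rw [mul_assoc, ← pow_add, Nat.add_sub_cancel' hmn]
lemma sum_prod_bool {n : ℕ} (f : Fin n → Bool → ℝ) :
    ∑ s : Fin n → Bool, ∏ i, f i (s i) = ∏ i, (f i true + f i false) := by
  have h := Finset.prod_univ_sum (fun _ : Fin n => (Finset.univ : Finset Bool)) f
  rw [Fintype.piFinset_univ] at h
  rw [← h]
  apply Finset.prod_congr rfl
  intro i _
  rw [Fintype.sum_bool]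

lemma weights_sum_one {n : ℕ} (p : ℝ) :
    ∑ s : Fin n → Bool, ∏ i, (if s i then p else 1-p) = 1 := by
  rw [sum_prod_bool (fun _ b => if b then p else 1-p)]
  simp

lemma expect_coord {n : ℕ} (p : ℝ) (i : Fin n) (g : Bool → ℝ) :
    ∑ s : Fin n → Bool, (∏ j, if s j then p else 1-p) * g (s i)
      = p * g true + (1-p) * g false := by
  have hterm : ∀ s : Fin n → Bool,
      (∏ j, if s j then p else 1-p) * g (s i)
        = ∏ j, ((if s j then p else 1-p) * (if j = i then g (s j) else 1)) := by
    intro s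
    rw [Finset.prod_mul_distrib]
    congr 1
    rw [Finset.prod_ite_eq' Finset.univ i (fun j => g (s j))]
    simp
  rw [Finset.sum_congr rfl (fun s _ => hterm s)]
  rw [sum_prod_bool (fun j b => (if b then p else 1-p) * (if j = i then g b else 1))]
  have : ∀ j : Fin n, ((if true = true then p else 1-p) * (if j = i then g true else 1)
      + (if false = true then p else 1-p) * (if j = i then g false else 1))
      = if j = i then (p * g true + (1-p) * g false) else 1 := by
    intro j
    by_cases h : j = i <;> simp [h] <;> ring
  rw [Finset.prod_congr rfl (fun j _ => this j)]
  rw [Finset.prod_ite_eq' Finset.univ i (fun _ => p * g true + (1-p) * g false)]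
  simp

lemma expect_card {n : ℕ} (p : ℝ) :
    ∑ s : Fin n → Bool, (∏ j, if s j then p else 1-p)
        * ((Finset.univ.filter (fun i : Fin n => s i = true)).card : ℝ)
      = p * n := by
  have hcard : ∀ s : Fin n → Bool,
      ((Finset.univ.filter (fun i : Fin n => s i = true)).card : ℝ)
        = ∑ i : Fin n, (if s i then (1:ℝ) else 0) := by
    intro s
    rw [Finset.card_filter]
    push_cast
    apply Finset.sum_congr rfl
    intro i _
    by_cases h : s i <;> simp [h]
  calc ∑ s : Fin n → Bool, (∏ j, if s j then p else 1-p)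
        * ((Finset.univ.filter (fun i : Fin n => s i = true)).card : ℝ)
      = ∑ s : Fin n → Bool, ∑ i : Fin n,
          (∏ j, if s j then p else 1-p) * (if s i then (1:ℝ) else 0) := by
        apply Finset.sum_congr rfl
        intro s _
        rw [hcard s, Finset.mul_sum]
    _ = ∑ i : Fin n, ∑ s : Fin n → Bool,
          (∏ j, if s j then p else 1-p) * (if s i then (1:ℝ) else 0) := Finset.sum_comm
    _ = ∑ i : Fin n, p := by
        apply Finset.sum_congr rfl
        intro i _
        rw [expect_coord p i (fun b => if b then (1:ℝ) else 0)]
        simp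
    _ = p * n := by simp [mul_comm]


/-- A random restriction and the majority function `MAJ(x) = sgn(∑ᵢ xᵢ)`.
For `p = n^{-α}` with a constant `α ∈ (0,1]` (i.e. `p = n^{-Ω(1)}`), consider a
random restriction `ρ ∼ R_p`: each variable independently stays alive (`s i = true`)
with probability `p` and is otherwise fixed to a uniform random bit (`z i`). The
restricted function is the LTF `(w_I, -∑_{i∉I} z_i)` where `I` is the set of live
variables, and it is `t`-imbalanced when `|∑_{i∉I} z_i| > t·‖w_I‖₂ = t·√|I|`.
Then there is a constant `C` such that for every `t ≥ 1`, the probability over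
`ρ ∼ R_p` that `MAJ↾ρ` is `t`-imbalanced is at least `1 - C·t·√p`. -/
theorem majority_random_restriction_imbalanced
    (α : ℝ) (hα0 : 0 < α) (hα1 : α ≤ 1) :
    ∃ C : ℝ, 0 < C ∧
      ∀ (n : ℕ) (p t : ℝ), 0 < n → p = (n : ℝ) ^ (-α) → 1 ≤ t →
        1 - C * t * Real.sqrt p ≤
          ∑ s : Fin n → Bool, ∑ z : Fin n → Bool,
            ((∏ i, if s i then p else 1 - p) * (1 / 2 ^ n)) *
              (if t * Real.sqrt (((univ.filter (fun i : Fin n => s i = true)).card : ℝ)) <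
                  |∑ i ∈ univ.filter (fun i : Fin n => s i = false), pm (z i)|
               then 1 else 0) := by
  refine ⟨5, by norm_num, ?_⟩
  intro n p t hn hp ht
  have hn0 : (0:ℝ) < n := by exact_mod_cast hn
  have hn1 : (1:ℝ) ≤ n := by exact_mod_cast hn
  have hp0 : 0 < p := by rw [hp]; exact Real.rpow_pos_of_pos hn0 _
  have hp1 : p ≤ 1 := by
    rw [hp]; exact Real.rpow_le_one_of_one_le_of_nonpos hn1 (by linarith)
  have ht0 : 0 < t := lt_of_lt_of_le one_pos ht
  have hsp0 : 0 ≤ Real.sqrt p := Real.sqrt_nonneg p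
  have hsp1 : Real.sqrt p ≤ 1 := Real.sqrt_le_one.mpr hp1
  have hpsq : Real.sqrt p * Real.sqrt p = p := Real.mul_self_sqrt hp0.le
  have hsq2 : Real.sqrt 2 ≤ 1.5 := by
    nlinarith [Real.sq_sqrt (show (0:ℝ) ≤ 2 by norm_num), Real.sqrt_nonneg 2]
  have hsn0 : (0:ℝ) < Real.sqrt n := Real.sqrt_pos.2 hn0
  -- p * n ≥ 1, hence 1/√n ≤ √p
  have hpn1 : (1:ℝ) ≤ p * n := by
    have e : p * n = (n:ℝ) ^ (-α + 1) := by
      rw [hp, Real.rpow_add hn0, Real.rpow_one]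
    rw [e]
    exact Real.one_le_rpow hn1 (by linarith)
  have hinv : 1 / Real.sqrt n ≤ Real.sqrt p := by
    rw [div_le_iff₀ hsn0, ← Real.sqrt_mul hp0.le]
    calc (1:ℝ) = Real.sqrt 1 := by rw [Real.sqrt_one]
      _ ≤ Real.sqrt (p * n) := Real.sqrt_le_sqrt hpn1
  have hple : p ≤ Real.sqrt p := by nlinarith
  have hfin1 : 2 * p ≤ 2 * (t * Real.sqrt p) := by nlinarith
  have hfin2 : Real.sqrt 2 * t * Real.sqrt p ≤ 1.5 * (t * Real.sqrt p) := by
    have : 0 ≤ t * Real.sqrt p := by positivity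
    nlinarith
  have hfin3 : Real.sqrt 2 / Real.sqrt n ≤ 1.5 * (t * Real.sqrt p) := by
    have h0 : 0 ≤ Real.sqrt 2 := Real.sqrt_nonneg 2
    have h2 : Real.sqrt 2 * (1 / Real.sqrt n) ≤ Real.sqrt 2 * Real.sqrt p :=
      mul_le_mul_of_nonneg_left hinv h0
    have h3 : Real.sqrt 2 * Real.sqrt p ≤ 1.5 * Real.sqrt p := by nlinarith
    have h4 : (1.5:ℝ) * Real.sqrt p ≤ 1.5 * (t * Real.sqrt p) := by nlinarith
    calc Real.sqrt 2 / Real.sqrt n = Real.sqrt 2 * (1 / Real.sqrt n) := by ring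
      _ ≤ 1.5 * (t * Real.sqrt p) := by linarith
  have hfinal : 2 * p + (Real.sqrt 2 * t * Real.sqrt p + (Real.sqrt 2 / Real.sqrt n))
      ≤ 5 * t * Real.sqrt p := by
    calc 2 * p + (Real.sqrt 2 * t * Real.sqrt p + (Real.sqrt 2 / Real.sqrt n))
        ≤ 2 * (t * Real.sqrt p) + (1.5 * (t * Real.sqrt p) + 1.5 * (t * Real.sqrt p)) := by
          linarith
      _ = 5 * t * Real.sqrt p := by ring
  have h2n0 : (0:ℝ) < 2^n := by positivity
  set w : (Fin n → Bool) → ℝ := fun s => ∏ i, if s i then p else 1 - p with hw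
  have hw0 : ∀ s, 0 ≤ w s := by
    intro s
    apply Finset.prod_nonneg
    intro i _
    split_ifs <;> linarith
  set lolcard : (Fin n → Bool) → ℝ :=
    fun s => ((univ.filter (fun i : Fin n => s i = true)).card : ℝ) with hlolcard
  set Nb : (Fin n → Bool) → ℕ := fun s =>
    (univ.filter (fun z : Fin n → Bool =>
      |∑ i ∈ univ.filter (fun i : Fin n => s i = false), pm (z i)|
        ≤ t * Real.sqrt (lolcard s))).card with hNb
  -- inner z-sum computation
  have hinner : ∀ s : Fin n → Bool,
      ∑ z : Fin n → Bool,
        (w s * (1 / 2 ^ n)) *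
          (if t * Real.sqrt (lolcard s) <
              |∑ i ∈ univ.filter (fun i : Fin n => s i = false), pm (z i)|
           then (1:ℝ) else 0)
      = w s - w s * ((Nb s : ℝ) / 2^n) := by
    intro s
    rw [← Finset.mul_sum]
    have hind : ∀ z : Fin n → Bool,
        (if t * Real.sqrt (lolcard s) <
            |∑ i ∈ univ.filter (fun i : Fin n => s i = false), pm (z i)|
         then (1:ℝ) else 0)
        = 1 - (if |∑ i ∈ univ.filter (fun i : Fin n => s i = false), pm (z i)|
            ≤ t * Real.sqrt (lolcard s) then (1:ℝ) else 0) := by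
      intro z
      rcases lt_or_ge (t * Real.sqrt (lolcard s))
        |∑ i ∈ univ.filter (fun i : Fin n => s i = false), pm (z i)| with h | h
      · rw [if_pos h, if_neg (by exact not_le.2 h)]; ring
      · rw [if_neg (by exact not_lt.2 h), if_pos h]; ring
    rw [Finset.sum_congr rfl (fun z _ => hind z), Finset.sum_sub_distrib]
    rw [Finset.sum_boole]
    have hcardz : ∑ _z : Fin n → Bool, (1:ℝ) = 2^n := by
      rw [Finset.sum_const, nsmul_eq_mul, mul_one]
      simp [Finset.card_univ]
    rw [hcardz]
    have : (Finset.filter (fun z : Fin n → Bool =>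
        |∑ i ∈ univ.filter (fun i : Fin n => s i = false), pm (z i)|
          ≤ t * Real.sqrt (lolcard s)) univ).card = Nb s := rfl
    rw [this]
    field_simp
  rw [Finset.sum_congr rfl (fun s _ => hinner s), Finset.sum_sub_distrib]
  have hw1 : ∑ s : Fin n → Bool, w s = 1 := weights_sum_one p
  rw [hw1]
  -- it remains to bound the balanced probability
  have hmain : ∑ s : Fin n → Bool, w s * ((Nb s : ℝ) / 2^n) ≤ 5 * t * Real.sqrt p := by
    -- pointwise bound
    have hkey : ∀ s : Fin n → Bool, ((Nb s : ℝ) / 2^n) ≤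
        2 * lolcard s / n + Real.sqrt 2 * (t * Real.sqrt (lolcard s) + 1) / Real.sqrt n := by
      intro s
      set Fs := univ.filter (fun i : Fin n => s i = false) with hFs
      set lam := t * Real.sqrt (lolcard s) with hlam
      have hlam0 : 0 ≤ lam := mul_nonneg ht0.le (Real.sqrt_nonneg _)
      have hcb := count_balanced n Fs lam hlam0
      have hNbdef : (Nb s : ℝ) = ((univ.filter (fun z : Fin n → Bool =>
          |∑ i ∈ Fs, pm (z i)| ≤ lam)).card : ℝ) := rfl
      have hlm : lolcard s + (Fs.card : ℝ) = n := by
        have h1 := Finset.card_filter_add_card_filter_not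
          (s := (univ : Finset (Fin n))) (p := fun i => s i = true)
        have h2 : univ.filter (fun i : Fin n => ¬ s i = true)
            = univ.filter (fun i : Fin n => s i = false) := by
          apply Finset.filter_congr
          intro i _
          simp
        rw [h2] at h1
        have h3 : ((univ.filter (fun i : Fin n => s i = true)).card : ℝ)
            + ((univ.filter (fun i : Fin n => s i = false)).card : ℝ) = (n:ℝ) := by
          rw [← Nat.cast_add]
          rw [h1]
          simp [Finset.card_univ]
        exact h3
      have hl0 : 0 ≤ lolcard s := Nat.cast_nonneg _
      have hFc0 : (0:ℝ) ≤ (Fs.card : ℝ) := Nat.cast_nonneg _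
      have hNb0 : (0:ℝ) ≤ (Nb s : ℝ) := Nat.cast_nonneg _
      rcases le_or_gt (2 * lolcard s) (n:ℝ) with hc | hc
      · -- many fixed variables
        have hterm1 : 0 ≤ 2 * lolcard s / n :=
          div_nonneg (by linarith) hn0.le
        have hnm : (n:ℝ) ≤ 2 * ((Fs.card : ℝ) + 1) := by linarith
        have hs1 : Real.sqrt n ≤ Real.sqrt 2 * Real.sqrt ((Fs.card : ℝ) + 1) := by
          rw [← Real.sqrt_mul (by norm_num : (0:ℝ) ≤ 2)]
          exact Real.sqrt_le_sqrt hnm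
        have hbound : (Nb s : ℝ) / 2^n ≤ Real.sqrt 2 * (lam + 1) / Real.sqrt n := by
          rw [div_le_div_iff₀ h2n0 hsn0]
          calc (Nb s : ℝ) * Real.sqrt n
              ≤ (Nb s : ℝ) * (Real.sqrt 2 * Real.sqrt ((Fs.card : ℝ) + 1)) :=
                mul_le_mul_of_nonneg_left hs1 hNb0
            _ = Real.sqrt 2 * ((Nb s : ℝ) * Real.sqrt ((Fs.card : ℝ) + 1)) := by ring
            _ ≤ Real.sqrt 2 * ((lam + 1) * 2^n) := by
                apply mul_le_mul_of_nonneg_left _ (Real.sqrt_nonneg 2)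
                exact hNbdef ▸ hcb
            _ = Real.sqrt 2 * (lam + 1) * 2^n := by ring
        calc (Nb s : ℝ) / 2^n ≤ Real.sqrt 2 * (lam + 1) / Real.sqrt n := hbound
          _ ≤ 2 * lolcard s / n + Real.sqrt 2 * (lam + 1) / Real.sqrt n := by linarith
      · -- many live variables : trivial bound
        have hterm2 : 0 ≤ Real.sqrt 2 * (lam + 1) / Real.sqrt n :=
          div_nonneg (mul_nonneg (Real.sqrt_nonneg 2) (by linarith)) (Real.sqrt_nonneg _)
        have hb1 : (Nb s : ℝ) / 2^n ≤ 1 := by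
          rw [div_le_one h2n0]
          have : Nb s ≤ 2^n := by
            rw [hNb]
            calc (univ.filter (fun z : Fin n → Bool =>
                |∑ i ∈ univ.filter (fun i : Fin n => s i = false), pm (z i)|
                  ≤ t * Real.sqrt (lolcard s))).card
                ≤ (univ : Finset (Fin n → Bool)).card := Finset.card_le_card (Finset.filter_subset _ _)
              _ = 2^n := by simp [Finset.card_univ]
          exact_mod_cast this
        have hb2 : (1:ℝ) ≤ 2 * lolcard s / n := by
          rw [le_div_iff₀ hn0]
          linarith
        linarith
    -- sum the pointwise bound
    have hsum1 : ∑ s : Fin n → Bool, w s * ((Nb s : ℝ) / 2^n)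
        ≤ ∑ s : Fin n → Bool, ((2/n) * (w s * lolcard s)
            + ((Real.sqrt 2 * t / Real.sqrt n) * (w s * Real.sqrt (lolcard s))
              + (Real.sqrt 2 / Real.sqrt n) * w s)) := by
      apply Finset.sum_le_sum
      intro s _
      calc w s * ((Nb s : ℝ) / 2^n)
          ≤ w s * (2 * lolcard s / n
              + Real.sqrt 2 * (t * Real.sqrt (lolcard s) + 1) / Real.sqrt n) :=
            mul_le_mul_of_nonneg_left (hkey s) (hw0 s)
        _ = (2/n) * (w s * lolcard s)
            + ((Real.sqrt 2 * t / Real.sqrt n) * (w s * Real.sqrt (lolcard s))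
              + (Real.sqrt 2 / Real.sqrt n) * w s) := by ring
    rw [Finset.sum_add_distrib, Finset.sum_add_distrib, ← Finset.mul_sum, ← Finset.mul_sum,
      ← Finset.mul_sum] at hsum1
    have hEl : ∑ s : Fin n → Bool, w s * lolcard s = p * n := expect_card p
    -- Jensen via Cauchy-Schwarz
    have hJ : ∑ s : Fin n → Bool, w s * Real.sqrt (lolcard s) ≤ Real.sqrt (p * n) := by
      have hCS := Finset.sum_mul_sq_le_sq_mul_sq univ
        (fun s : Fin n → Bool => Real.sqrt (w s))
        (fun s : Fin n → Bool => Real.sqrt (w s) * Real.sqrt (lolcard s))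
      have he1 : ∀ s : Fin n → Bool,
          Real.sqrt (w s) * (Real.sqrt (w s) * Real.sqrt (lolcard s))
            = w s * Real.sqrt (lolcard s) := by
        intro s
        rw [← mul_assoc, Real.mul_self_sqrt (hw0 s)]
      have he2 : ∀ s : Fin n → Bool, (Real.sqrt (w s))^2 = w s := fun s => Real.sq_sqrt (hw0 s)
      have he3 : ∀ s : Fin n → Bool,
          (Real.sqrt (w s) * Real.sqrt (lolcard s))^2 = w s * lolcard s := by
        intro s
        rw [mul_pow, Real.sq_sqrt (hw0 s), Real.sq_sqrt (Nat.cast_nonneg _)]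
      rw [Finset.sum_congr rfl (fun s _ => he1 s), Finset.sum_congr rfl (fun s _ => he2 s),
        Finset.sum_congr rfl (fun s _ => he3 s), hw1, one_mul, hEl] at hCS
      have hnn : 0 ≤ ∑ s : Fin n → Bool, w s * Real.sqrt (lolcard s) :=
        Finset.sum_nonneg (fun s _ => mul_nonneg (hw0 s) (Real.sqrt_nonneg _))
      exact (Real.le_sqrt hnn (by positivity)).2 hCS
    have hsqpn : Real.sqrt (p * n) = Real.sqrt p * Real.sqrt n :=
      Real.sqrt_mul hp0.le _
    -- assemble
    have hA : (2/(n:ℝ)) * (p * n) = 2 * p := by field_simp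
    have hB : (Real.sqrt 2 * t / Real.sqrt n) * (Real.sqrt p * Real.sqrt n)
        = Real.sqrt 2 * t * Real.sqrt p := by field_simp
    have hchain : ∑ s : Fin n → Bool, w s * ((Nb s : ℝ) / 2^n)
        ≤ 2 * p + (Real.sqrt 2 * t * Real.sqrt p + (Real.sqrt 2 / Real.sqrt n)) := by
      refine hsum1.trans ?_
      rw [hEl, hw1, mul_one, hA]
      have h1 : (Real.sqrt 2 * t / Real.sqrt n) * ∑ s : Fin n → Bool, w s * Real.sqrt (lolcard s)
          ≤ Real.sqrt 2 * t * Real.sqrt p := by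
        calc (Real.sqrt 2 * t / Real.sqrt n) * ∑ s : Fin n → Bool, w s * Real.sqrt (lolcard s)
            ≤ (Real.sqrt 2 * t / Real.sqrt n) * Real.sqrt (p * n) :=
              mul_le_mul_of_nonneg_left hJ (by positivity)
          _ = Real.sqrt 2 * t * Real.sqrt p := by rw [hsqpn, hB]
      exact add_le_add_right (add_le_add_left h1 _) _
    exact hchain.trans hfinal
  exact sub_le_sub_left hmain 1

end
end

section
/- Let G be a d_G-regular graph on n̂ vertices with second eigenvalue bound giving the hitting property: for any set A of density ρ, a random walk of length ℓ-1 (ℓ vertices) starting from a uniform vertex avoids A with probability at most ε when ℓ ≥ (c_G/ρ)·log(1/ε). For x̂ ∈ {0,1}^{n̂} with relative Hamming weight at least ρ, define the encoding x̄ whose coordinates are indexed by pairs (W,S) of a walk W = (i₁,...,i_ℓ) and a subset S ⊆ [ℓ], with value x̄_{(W,S)} = ⊕_{j∈S} x̂_{i_j}. Then the relative Hamming weight of x̄ is at least 1/2 - ε and at most 1/2. -/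
open Finset
open scoped Classical

/-- The `j`-th vertex (for `j : Fin (L+1)`) of the walk on a `dG`-regular graph
(given by a neighbor function `nbr`) that starts at `v` and follows the `L` edge
labels `e`. -/
def walkVert {V : Type*} {dG L : ℕ} (nbr : V → Fin dG → V)
    (v : V) (e : Fin L → Fin dG) (j : Fin (L + 1)) : V :=
  (List.range j.val).foldl (fun u k => if h : k < L then nbr u (e ⟨k, h⟩) else u) v

/-- For a nonzero `f : Fin N → ZMod 2`, exactly half of the subsets `S` of `Fin N`
have `∑ j ∈ S, f j = 1`. -/
lemma card_parity_half {N : ℕ} (f : Fin N → ZMod 2) (hf : ∃ j, f j ≠ 0) :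
    2 * (univ.filter (fun S : Finset (Fin N) => ∑ j ∈ S, f j = 1)).card = 2 ^ N := by
  obtain ⟨j0, hj0⟩ := hf
  have hall : ∀ a : ZMod 2, a ≠ 0 → a = 1 := by decide
  have hj1 : f j0 = 1 := hall _ hj0
  set g : Finset (Fin N) → Finset (Fin N) :=
    fun S => if j0 ∈ S then S.erase j0 else insert j0 S with hg
  have hneg : (-1 : ZMod 2) = 1 := by decide
  have hsum : ∀ S, ∑ j ∈ g S, f j = (∑ j ∈ S, f j) + 1 := by
    intro S
    by_cases h : j0 ∈ S
    · simp only [hg, if_pos h]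
      rw [Finset.sum_erase_eq_sub h, hj1, sub_eq_add_neg, hneg]
    · simp only [hg, if_neg h, Finset.sum_insert h, hj1]
      ring
  have hgg : ∀ S, g (g S) = S := by
    intro S
    by_cases h : j0 ∈ S
    · simp [hg, h, Finset.insert_erase h]
    · simp [hg, h]
  have hzo : ∀ a : ZMod 2, a ≠ 1 ↔ a = 0 := by decide
  have hcard : (univ.filter (fun S : Finset (Fin N) => ∑ j ∈ S, f j = 1)).card
      = (univ.filter (fun S : Finset (Fin N) => ¬ (∑ j ∈ S, f j = 1))).card := by
    apply Finset.card_bij' (fun S _ => g S) (fun S _ => g S)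
    · intro S hS
      simp only [Finset.mem_filter, Finset.mem_univ, true_and] at hS ⊢
      rw [hsum, hS]
      decide
    · intro S hS
      simp only [Finset.mem_filter, Finset.mem_univ, true_and] at hS ⊢
      rw [hsum, (hzo _).mp hS]
      decide
    · intro S _; exact hgg S
    · intro S _; exact hgg S
  have hsplit := Finset.card_filter_add_card_filter_not
    (s := (univ : Finset (Finset (Fin N))))
    (p := fun S => ∑ j ∈ S, f j = 1)
  have huniv : (univ : Finset (Finset (Fin N))).card = 2 ^ N := by
    rw [Finset.card_univ, Fintype.card_finset, Fintype.card_fin]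
  omega

/-- Expander-walk distance amplification (Naor–Naor). Let `G` be a `dG`-regular
graph on the vertex set `V`, given by a neighbor function `nbr`, with the hitting
property: for every `A ⊆ V` of density at least `ρ`, the fraction of walks with
`ℓ = L+1` vertices (a uniformly random start plus `L` uniformly random edge
labels) that avoid `A` is at most `ε`. Let `xhat : V → GF(2)` have relative Hamming
weight at least `ρ`, and define the encoding `x̄` indexed by pairs `(W,S)` of a
walk `W` and a subset `S ⊆ [ℓ]`, with `x̄_{(W,S)} = ⊕_{j∈S} xhat_{i_j}` (the parity
of the bits of `xhat` at the `S`-positions of `W`). Then the relative Hamming weight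
of `x̄` is at least `1/2 - ε` and at most `1/2`. -/
theorem expander_walk_distance_amplification
    (V : Type*) [Fintype V] [DecidableEq V] (dG L : ℕ) (ρ ε : ℝ) (hε : 0 ≤ ε)
    (nbr : V → Fin dG → V)
    (hhit : ∀ A : Finset V, ρ ≤ (A.card : ℝ) / (Fintype.card V : ℝ) →
      ((((univ : Finset (V × (Fin L → Fin dG)))).filter
          (fun wk => ∀ j : Fin (L + 1), walkVert nbr wk.1 wk.2 j ∉ A)).card : ℝ)
        ≤ ε * (Fintype.card (V × (Fin L → Fin dG)) : ℝ))
    (xhat : V → ZMod 2)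
    (hweight : ρ * (Fintype.card V : ℝ) ≤
      (((univ : Finset V).filter (fun v => xhat v ≠ 0)).card : ℝ)) :
    (1 / 2 - ε) * (Fintype.card ((V × (Fin L → Fin dG)) × Finset (Fin (L + 1))) : ℝ)
      ≤ ((((univ : Finset ((V × (Fin L → Fin dG)) × Finset (Fin (L + 1))))).filter
          (fun ws => (∑ j ∈ ws.2, xhat (walkVert nbr ws.1.1 ws.1.2 j)) = 1)).card : ℝ) ∧
    ((((univ : Finset ((V × (Fin L → Fin dG)) × Finset (Fin (L + 1))))).filter
          (fun ws => (∑ j ∈ ws.2, xhat (walkVert nbr ws.1.1 ws.1.2 j)) = 1)).card : ℝ)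
      ≤ (1 / 2) * (Fintype.card ((V × (Fin L → Fin dG)) × Finset (Fin (L + 1))) : ℝ) := by
  classical
  set A : Finset V := univ.filter (fun v => xhat v ≠ 0) with hA
  set T : ℕ := (((univ : Finset ((V × (Fin L → Fin dG)) × Finset (Fin (L + 1))))).filter
          (fun ws => (∑ j ∈ ws.2, xhat (walkVert nbr ws.1.1 ws.1.2 j)) = 1)).card with hT
  set B : Finset (V × (Fin L → Fin dG)) :=
    (univ : Finset (V × (Fin L → Fin dG))).filter
      (fun wk => ∀ j : Fin (L + 1), walkVert nbr wk.1 wk.2 j ∉ A) with hB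
  -- per-walk count
  have key : ∀ wk : V × (Fin L → Fin dG),
      ((univ.filter (fun S : Finset (Fin (L+1)) =>
          ∑ j ∈ S, xhat (walkVert nbr wk.1 wk.2 j) = 1)).card)
        = if (∀ j : Fin (L + 1), walkVert nbr wk.1 wk.2 j ∉ A) then 0 else 2 ^ L := by
    intro wk
    split_ifs with h
    · rw [Finset.card_eq_zero, Finset.filter_eq_empty_iff]
      intro S _
      have h0 : ∀ j : Fin (L+1), xhat (walkVert nbr wk.1 wk.2 j) = 0 := by
        intro j
        have := h j
        simp only [hA, Finset.mem_filter, Finset.mem_univ, true_and, not_not] at this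
        exact this
      rw [Finset.sum_congr rfl (fun j _ => h0 j), Finset.sum_const_zero]
      decide
    · push_neg at h
      obtain ⟨j, hj⟩ := h
      have hj' : xhat (walkVert nbr wk.1 wk.2 j) ≠ 0 := by
        simp only [hA, Finset.mem_filter, Finset.mem_univ, true_and] at hj
        exact hj
      have h2 : 2 * ((univ.filter (fun S : Finset (Fin (L+1)) =>
          ∑ j ∈ S, xhat (walkVert nbr wk.1 wk.2 j) = 1)).card) = 2 ^ (L + 1) :=
        card_parity_half (fun j => xhat (walkVert nbr wk.1 wk.2 j)) ⟨j, hj'⟩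
      rw [pow_succ] at h2
      omega
  -- total count as a sum over walks
  have hTsum2 : T = ∑ wk : V × (Fin L → Fin dG),
      (if (∀ j : Fin (L + 1), walkVert nbr wk.1 wk.2 j ∉ A) then 0 else 2 ^ L) := by
    rw [hT, Finset.card_filter, Fintype.sum_prod_type]
    exact Finset.sum_congr rfl (fun wk _ =>
      ((Finset.card_filter _ _).symm).trans (key wk))
  have hcount : T + B.card * 2 ^ L
      = Fintype.card (V × (Fin L → Fin dG)) * 2 ^ L := by
    rw [hTsum2, Finset.sum_ite, Finset.sum_const_zero, zero_add, Finset.sum_const,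
      smul_eq_mul]
    have hsplit := Finset.card_filter_add_card_filter_not
      (s := (univ : Finset (V × (Fin L → Fin dG))))
      (p := fun wk => ∀ j : Fin (L + 1), walkVert nbr wk.1 wk.2 j ∉ A)
    rw [Finset.card_univ] at hsplit
    rw [← hB] at hsplit
    rw [← hsplit]; ring
  have hcardtot : (Fintype.card ((V × (Fin L → Fin dG)) × Finset (Fin (L + 1))) : ℝ)
      = (Fintype.card (V × (Fin L → Fin dG)) : ℝ) * (2 * 2 ^ L) := by
    rw [Fintype.card_prod, Fintype.card_finset, Fintype.card_fin]
    push_cast [pow_succ]; ring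
  have hcountR : (T : ℝ) + (B.card : ℝ) * 2 ^ L
      = (Fintype.card (V × (Fin L → Fin dG)) : ℝ) * 2 ^ L := by
    exact_mod_cast congrArg (Nat.cast (R := ℝ)) hcount
  have hBnn : (0:ℝ) ≤ (B.card : ℝ) := Nat.cast_nonneg _
  have h2L : (0:ℝ) < 2 ^ L := pow_pos (by norm_num) L
  constructor
  · -- lower bound
    rw [hcardtot]
    by_cases hV : Fintype.card V = 0
    · have hP0 : Fintype.card (V × (Fin L → Fin dG)) = 0 := by
        rw [Fintype.card_prod, hV, zero_mul]
      have hB0 : B.card = 0 := by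
        have h1 : B.card ≤ Fintype.card (V × (Fin L → Fin dG)) := by
          rw [← Finset.card_univ]
          exact Finset.card_filter_le _ _
        omega
      have hT0 : (T : ℝ) = 0 := by
        rw [hP0] at hcountR
        rw [hB0] at hcountR
        push_cast at hcountR
        linarith
      rw [hP0, hT0]
      push_cast
      nlinarith
    · have hVpos : (0:ℝ) < (Fintype.card V : ℝ) := by
        exact_mod_cast Nat.pos_of_ne_zero hV
      have hdens : ρ ≤ (A.card : ℝ) / (Fintype.card V : ℝ) :=
        (le_div_iff₀ hVpos).mpr hweight
      have hhitA := hhit A hdens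
      rw [← hB] at hhitA
      have hPnn : (0:ℝ) ≤ (Fintype.card (V × (Fin L → Fin dG)) : ℝ) := Nat.cast_nonneg _
      nlinarith [mul_le_mul_of_nonneg_right hhitA (le_of_lt h2L)]
  · rw [hcardtot]
    nlinarith
end

section
/- Let y be a distribution over {0,1}^n that is p-bounded in pairs, and for each i ∈ [m], let k_i ∈ [m] be distinct indices (a ranking of coordinates). Then for every fixed i ∈ [m], Pr_{y}[y_i = 1 and Σ_j y_j ≥ 2] ≤ min{p, m·p²} ≤ sqrt(m·p³), and consequently Σ_{i∈[m]} (1/√(k_i)) · Pr[y_i = 1 ∧ Σ_j y_j ≥ 2] ≤ O(m·p^{3/2}). -/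
open Finset
open scoped Classical

noncomputable section

lemma pr_mono {α : Type*} [Fintype α] (p : PMF α) {P Q : α → Prop}
    (h : ∀ x, P x → Q x) : pr p P ≤ pr p Q := by
  apply Finset.sum_le_sum
  intro x _
  by_cases hP : P x
  · simp [hP, h x hP]
  · simp only [hP, if_false]
    split <;> simp [ENNReal.toReal_nonneg]

lemma pr_union {α ι : Type*} [Fintype α] (p : PMF α) (s : Finset ι) (P : ι → α → Prop) :
    pr p (fun x => ∃ j ∈ s, P j x) ≤ ∑ j ∈ s, pr p (P j) := by
  unfold pr
  rw [Finset.sum_comm]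
  apply Finset.sum_le_sum
  intro x _
  by_cases h : ∃ j ∈ s, P j x
  · obtain ⟨j, hjs, hj⟩ := h
    rw [if_pos ⟨j, hjs, hj⟩]
    calc (p x).toReal = (if P j x then (p x).toReal else 0) := by simp [hj]
      _ ≤ ∑ j ∈ s, (if P j x then (p x).toReal else 0) := by
          apply Finset.single_le_sum (fun i _ => ?_) hjs
          split <;> simp [ENNReal.toReal_nonneg]
  · rw [if_neg h]
    apply Finset.sum_nonneg
    intro j _
    split <;> simp [ENNReal.toReal_nonneg]

lemma sum_inv_sqrt (m : ℕ) :
    ∑ j ∈ Finset.range m, 1 / Real.sqrt ((j : ℝ) + 1) ≤ 2 * Real.sqrt m := by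
  induction m with
  | zero => simp
  | succ m ih =>
    rw [Finset.sum_range_succ]
    have hm1 : (0:ℝ) < Real.sqrt ((m:ℝ) + 1) := by
      apply Real.sqrt_pos.mpr; positivity
    have key : 2 * Real.sqrt m + 1 / Real.sqrt ((m:ℝ) + 1) ≤ 2 * Real.sqrt ((m:ℝ) + 1) := by
      have h1 : Real.sqrt m * Real.sqrt ((m:ℝ)+1) = Real.sqrt ((m:ℝ) * ((m:ℝ)+1)) :=
        (Real.sqrt_mul (by positivity) _).symm
      have h2 : Real.sqrt ((m:ℝ) * ((m:ℝ)+1)) ≤ (m:ℝ) + 1/2 := by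
        rw [show (m:ℝ) + 1/2 = Real.sqrt (((m:ℝ)+1/2)^2) by
          rw [Real.sqrt_sq (by positivity)]]
        apply Real.sqrt_le_sqrt
        nlinarith
      have h3 : Real.sqrt ((m:ℝ)+1) * Real.sqrt ((m:ℝ)+1) = (m:ℝ) + 1 :=
        Real.mul_self_sqrt (by positivity)
      have key' : 1 / Real.sqrt ((m:ℝ)+1) ≤ 2*Real.sqrt ((m:ℝ)+1) - 2*Real.sqrt m := by
        rw [div_le_iff₀ hm1]
        nlinarith [Real.sqrt_nonneg (m:ℝ)]
      linarith
    calc ∑ j ∈ Finset.range m, 1 / Real.sqrt ((j:ℝ) + 1) + 1 / Real.sqrt ((m:ℝ) + 1)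
        ≤ 2 * Real.sqrt m + 1 / Real.sqrt ((m:ℝ) + 1) := by linarith
      _ ≤ 2 * Real.sqrt ((m:ℝ) + 1) := key
      _ = 2 * Real.sqrt ((m:ℕ).succ : ℝ) := by push_cast; ring_nf

/-- The key counting step in the derandomized Kane–Williams restriction lemma.
There is a universal constant `C` such that the following holds. Let `y` be a
distribution over `{0,1}^m` that is `p`-bounded in pairs (each coordinate is `1`
with probability at most `p`, and each pair of distinct coordinates is
simultaneously `1` with probability at most `p²`), and let `k : Fin m → Fin m` be
a ranking (distinct indices, i.e. a bijection; `k i` is 0-indexed, so the paper's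
`k_i ∈ [m]` is `(k i) + 1`). Then for every `i`,
`Pr[y_i = 1 ∧ ∑_j y_j ≥ 2] ≤ min{p, m·p²} ≤ √(m·p³)`, and consequently
`∑_i (1/√(k_i)) · Pr[y_i = 1 ∧ ∑_j y_j ≥ 2] ≤ C·m·p^{3/2}`. -/
theorem kane_williams_counting :
    ∃ C : ℝ, 0 < C ∧
      ∀ (m : ℕ) (p : ℝ) (y : PMF (Fin m → Bool)) (k : Fin m → Fin m),
        0 ≤ p → Function.Bijective k →
        (∀ i, pr y (fun v => v i = true) ≤ p) →
        (∀ i j, i ≠ j → pr y (fun v => v i = true ∧ v j = true) ≤ p ^ 2) →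
        ((∀ i, pr y (fun v => v i = true ∧
              2 ≤ (univ.filter (fun j => v j = true)).card)
            ≤ min p ((m : ℝ) * p ^ 2)) ∧
          min p ((m : ℝ) * p ^ 2) ≤ Real.sqrt ((m : ℝ) * p ^ 3) ∧
          ∑ i, (1 / Real.sqrt (((k i : ℕ) : ℝ) + 1)) *
              pr y (fun v => v i = true ∧
                2 ≤ (univ.filter (fun j => v j = true)).card)
            ≤ C * m * p ^ (3 / 2 : ℝ)) := by
  refine ⟨2, by norm_num, fun m p y k hp hk h1 h2 => ?_⟩
  set E := fun (i : Fin m) => fun (v : Fin m → Bool) => v i = true ∧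
      2 ≤ (univ.filter (fun j => v j = true)).card with hE
  -- per-index bound
  have hbound : ∀ i, pr y (E i) ≤ min p ((m : ℝ) * p ^ 2) := by
    intro i
    apply le_min
    · exact le_trans (pr_mono y fun v hv => hv.1) (h1 i)
    · -- E i implies ∃ j ∈ univ.erase i, v i = 1 ∧ v j = 1
      have step : pr y (E i) ≤ pr y (fun v => ∃ j ∈ univ.erase i,
          v i = true ∧ v j = true) := by
        apply pr_mono
        rintro v ⟨hvi, hcard⟩
        obtain ⟨a, ha, b, hb, hab⟩ := Finset.one_lt_card.mp hcard
        simp only [Finset.mem_filter] at ha hb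
        rcases eq_or_ne a i with rfl | hai
        · exact ⟨b, Finset.mem_erase.mpr ⟨(fun h => hab h.symm), Finset.mem_univ b⟩,
            hvi, hb.2⟩
        · exact ⟨a, Finset.mem_erase.mpr ⟨hai, Finset.mem_univ a⟩, hvi, ha.2⟩
      calc pr y (E i) ≤ ∑ j ∈ univ.erase i, pr y (fun v => v i = true ∧ v j = true) :=
            le_trans step (pr_union y _ _)
        _ ≤ ∑ _j ∈ univ.erase i, p ^ 2 :=
            Finset.sum_le_sum fun j hj => h2 i j (Finset.ne_of_mem_erase hj).symm
        _ = ((univ.erase i).card : ℝ) * p ^ 2 := by rw [Finset.sum_const]; push_cast; ring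
        _ ≤ (m : ℝ) * p ^ 2 := by
            apply mul_le_mul_of_nonneg_right _ (by positivity)
            have := Finset.card_erase_le (a := i) (s := (univ : Finset (Fin m)))
            simp only [Finset.card_univ, Fintype.card_fin] at this ⊢
            exact_mod_cast this
  refine ⟨hbound, ?_, ?_⟩
  · -- min ≤ sqrt
    have : min p ((m:ℝ) * p^2) ≤ Real.sqrt (p * ((m:ℝ) * p^2)) := by
      rcases le_total p ((m:ℝ) * p^2) with h | h
      · rw [min_eq_left h]
        calc p = Real.sqrt (p * p) := by rw [Real.sqrt_mul_self hp]
          _ ≤ Real.sqrt (p * ((m:ℝ)*p^2)) := Real.sqrt_le_sqrt (by nlinarith)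
      · rw [min_eq_right h]
        have hmp : 0 ≤ (m:ℝ) * p^2 := by positivity
        calc (m:ℝ)*p^2 = Real.sqrt (((m:ℝ)*p^2) * ((m:ℝ)*p^2)) := by
              rw [Real.sqrt_mul_self hmp]
          _ ≤ Real.sqrt (p * ((m:ℝ)*p^2)) := Real.sqrt_le_sqrt (by nlinarith)
    calc min p ((m:ℝ) * p^2) ≤ Real.sqrt (p * ((m:ℝ) * p^2)) := this
      _ = Real.sqrt ((m:ℝ) * p^3) := by ring_nf
  · -- final sum
    have hsqrt : Real.sqrt ((m:ℝ) * p^3) = Real.sqrt m * p ^ (3/2 : ℝ) := by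
      have h3 : Real.sqrt (p^3) = p ^ (3/2:ℝ) := by
        rw [Real.sqrt_eq_rpow, ← Real.rpow_natCast p 3, ← Real.rpow_mul hp]
        norm_num
      rw [Real.sqrt_mul (by positivity), h3]
    have hmin_le : min p ((m:ℝ) * p^2) ≤ Real.sqrt m * p ^ (3/2 : ℝ) := by
      rw [← hsqrt]
      rcases le_total p ((m:ℝ) * p^2) with h | h
      · rw [min_eq_left h]
        calc p = Real.sqrt (p * p) := by rw [Real.sqrt_mul_self hp]
          _ ≤ Real.sqrt ((m:ℝ)*p^3) := Real.sqrt_le_sqrt (by nlinarith)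
      · rw [min_eq_right h]
        have hmp : 0 ≤ (m:ℝ) * p^2 := by positivity
        calc (m:ℝ)*p^2 = Real.sqrt (((m:ℝ)*p^2) * ((m:ℝ)*p^2)) := by
              rw [Real.sqrt_mul_self hmp]
          _ ≤ Real.sqrt ((m:ℝ)*p^3) := Real.sqrt_le_sqrt (by nlinarith)
    have hterm : ∀ i, (1 / Real.sqrt (((k i : ℕ) : ℝ) + 1)) * pr y (E i)
        ≤ (1 / Real.sqrt (((k i : ℕ) : ℝ) + 1)) * (Real.sqrt m * p ^ (3/2 : ℝ)) := by
      intro i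
      apply mul_le_mul_of_nonneg_left _ (by positivity)
      exact le_trans (hbound i) hmin_le
    calc ∑ i, (1 / Real.sqrt (((k i : ℕ) : ℝ) + 1)) * pr y (E i)
        ≤ ∑ i, (1 / Real.sqrt (((k i : ℕ) : ℝ) + 1)) * (Real.sqrt m * p ^ (3/2 : ℝ)) :=
          Finset.sum_le_sum fun i _ => hterm i
      _ = (∑ i, 1 / Real.sqrt (((k i : ℕ) : ℝ) + 1)) * (Real.sqrt m * p ^ (3/2 : ℝ)) := by
          rw [Finset.sum_mul]
      _ = (∑ i : Fin m, 1 / Real.sqrt (((i : ℕ) : ℝ) + 1)) * (Real.sqrt m * p ^ (3/2 : ℝ)) := by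
          congr 1
          exact Fintype.sum_bijective k hk _ _ (fun i => rfl)
      _ = (∑ j ∈ Finset.range m, 1 / Real.sqrt ((j : ℝ) + 1)) * (Real.sqrt m * p ^ (3/2 : ℝ)) := by
          rw [Fin.sum_univ_eq_sum_range (fun j => 1 / Real.sqrt ((j : ℝ) + 1))]
      _ ≤ (2 * Real.sqrt m) * (Real.sqrt m * p ^ (3/2 : ℝ)) := by
          apply mul_le_mul_of_nonneg_right (sum_inv_sqrt m) (by positivity)
      _ = 2 * (Real.sqrt m * Real.sqrt m) * p ^ (3/2 : ℝ) := by ring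
      _ = 2 * m * p ^ (3/2 : ℝ) := by
          rw [Real.mul_self_sqrt (by positivity)]

end
end

section
/- Let w ∈ ℝ^n with |w₁| ≥ ... ≥ |w_n| have μ-critical index h, let T = [n]\[h], and let I ⊆ T satisfy ‖w_I‖₂ ≤ sqrt(p/μ)·‖w_T‖₂ where p < μ/2. Then for every fixed assignment z_{[h]} ∈ {-1,1}^h to the first h variables and every t > 0, the probability over uniform z_{T} ∈ {-1,1}^{T} that ⟨w_{[n]\I}, z_{[n]\I}⟩ ∈ θ ± t·sqrt(p/μ)·‖w_T‖₂ is at most O(t·sqrt(p/μ) + μ). -/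
open Finset
open scoped Classical

noncomputable section

/-! ### Auxiliary lemmas: the Fejér-type kernel -/

noncomputable def gker (x : ℝ) : ℝ := ∫ ξ in (-1:ℝ)..1, (1 - |ξ|) * Real.cos (ξ * x)

lemma contKer (x : ℝ) : Continuous (fun ξ : ℝ => (1 - |ξ|) * Real.cos (ξ * x)) := by
  continuity

lemma intKer (x a b : ℝ) : IntervalIntegrable (fun ξ : ℝ => (1 - |ξ|) * Real.cos (ξ * x)) MeasureTheory.volume a b :=
  (contKer x).intervalIntegrable _ _

lemma gker_pos_part (x : ℝ) (hx : x ≠ 0) :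
    (∫ ξ in (0:ℝ)..1, (1 - |ξ|) * Real.cos (ξ * x)) = (1 - Real.cos x) / x ^ 2 := by
  have hcong : ∫ ξ in (0:ℝ)..1, (1 - |ξ|) * Real.cos (ξ * x)
      = ∫ ξ in (0:ℝ)..1, (1 - ξ) * Real.cos (ξ * x) := by
    apply intervalIntegral.integral_congr
    intro ξ hξ
    rw [Set.uIcc_of_le (by norm_num : (0:ℝ) ≤ 1)] at hξ
    simp only; rw [abs_of_nonneg hξ.1]
  rw [hcong]
  have key : ∀ ξ ∈ Set.uIcc (0:ℝ) 1,
      HasDerivAt (fun ξ : ℝ => (1 - ξ) * Real.sin (ξ * x) / x - Real.cos (ξ * x) / x ^ 2)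
        ((1 - ξ) * Real.cos (ξ * x)) ξ := by
    intro ξ _
    have h1 : HasDerivAt (fun ξ : ℝ => ξ * x) x ξ := by
      simpa using (hasDerivAt_id ξ).mul_const x
    have hsin : HasDerivAt (fun ξ : ℝ => Real.sin (ξ * x)) (Real.cos (ξ * x) * x) ξ :=
      by have := (Real.hasDerivAt_sin (ξ * x)).comp ξ h1; exact this
    have hcos : HasDerivAt (fun ξ : ℝ => Real.cos (ξ * x)) (-Real.sin (ξ * x) * x) ξ :=
      by have := (Real.hasDerivAt_cos (ξ * x)).comp ξ h1; exact this
    have hone : HasDerivAt (fun ξ : ℝ => 1 - ξ) (-1) ξ := by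
      simpa using (hasDerivAt_id ξ).const_sub (1:ℝ)
    have := ((hone.mul hsin).div_const x).sub (hcos.div_const (x ^ 2))
    refine this.congr_deriv ?_
    field_simp
    ring
  rw [intervalIntegral.integral_eq_sub_of_hasDerivAt key
    (((continuous_const.sub continuous_id).mul (by continuity)).intervalIntegrable _ _)]
  simp
  field_simp
  ring

lemma gker_neg_part (x : ℝ) (hx : x ≠ 0) :
    (∫ ξ in (-1:ℝ)..0, (1 - |ξ|) * Real.cos (ξ * x)) = (1 - Real.cos x) / x ^ 2 := by
  have hcong : ∫ ξ in (-1:ℝ)..0, (1 - |ξ|) * Real.cos (ξ * x)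
      = ∫ ξ in (-1:ℝ)..0, (1 + ξ) * Real.cos (ξ * x) := by
    apply intervalIntegral.integral_congr
    intro ξ hξ
    rw [Set.uIcc_of_le (by norm_num : (-1:ℝ) ≤ 0)] at hξ
    simp only; rw [abs_of_nonpos hξ.2]
    ring_nf
  rw [hcong]
  have key : ∀ ξ ∈ Set.uIcc (-1:ℝ) 0,
      HasDerivAt (fun ξ : ℝ => (1 + ξ) * Real.sin (ξ * x) / x + Real.cos (ξ * x) / x ^ 2)
        ((1 + ξ) * Real.cos (ξ * x)) ξ := by
    intro ξ _
    have h1 : HasDerivAt (fun ξ : ℝ => ξ * x) x ξ := by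
      simpa using (hasDerivAt_id ξ).mul_const x
    have hsin : HasDerivAt (fun ξ : ℝ => Real.sin (ξ * x)) (Real.cos (ξ * x) * x) ξ :=
      by have := (Real.hasDerivAt_sin (ξ * x)).comp ξ h1; exact this
    have hcos : HasDerivAt (fun ξ : ℝ => Real.cos (ξ * x)) (-Real.sin (ξ * x) * x) ξ :=
      by have := (Real.hasDerivAt_cos (ξ * x)).comp ξ h1; exact this
    have hone : HasDerivAt (fun ξ : ℝ => 1 + ξ) 1 ξ := by
      simpa using (hasDerivAt_id ξ).const_add (1:ℝ)
    have := ((hone.mul hsin).div_const x).add (hcos.div_const (x ^ 2))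
    refine this.congr_deriv ?_
    field_simp
    ring
  rw [intervalIntegral.integral_eq_sub_of_hasDerivAt key
    (((continuous_const.add continuous_id).mul (by continuity)).intervalIntegrable _ _)]
  simp [Real.cos_neg]
  try field_simp
  try ring

lemma gker_eq (x : ℝ) (hx : x ≠ 0) : gker x = 2 * (1 - Real.cos x) / x ^ 2 := by
  rw [gker, ← intervalIntegral.integral_add_adjacent_intervals (intKer x (-1) 0) (intKer x 0 1),
    gker_pos_part x hx, gker_neg_part x hx]
  ring

lemma gker_nonneg (x : ℝ) : 0 ≤ gker x := by
  rcases eq_or_ne x 0 with h | h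
  · subst h
    rw [gker]
    apply intervalIntegral.integral_nonneg (by norm_num)
    intro ξ hξ
    have h1 : |ξ| ≤ 1 := abs_le.2 ⟨hξ.1, hξ.2⟩
    have : Real.cos (ξ * 0) = 1 := by simp
    rw [this]
    nlinarith
  · rw [gker_eq x h]
    have h1 := Real.cos_le_one x
    apply div_nonneg (by linarith) (sq_nonneg x)

lemma gker_ge (x : ℝ) (hx : |x| ≤ 1) : gker 1 ≤ gker x := by
  rw [gker, gker]
  apply intervalIntegral.integral_mono_on (by norm_num) (intKer 1 (-1) 1) (intKer x (-1) 1)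
  intro ξ hξ
  have h1 : |ξ| ≤ 1 := abs_le.2 ⟨hξ.1, hξ.2⟩
  have h2 : 0 ≤ 1 - |ξ| := by linarith
  apply mul_le_mul_of_nonneg_left _ h2
  have hle : |ξ * x| ≤ |ξ * 1| := by
    rw [abs_mul, abs_mul]
    exact mul_le_mul_of_nonneg_left (by simpa using hx) (abs_nonneg ξ)
  calc Real.cos (ξ * 1) = Real.cos |ξ * 1| := (Real.cos_abs _).symm
    _ ≤ Real.cos |ξ * x| := by
        apply Real.cos_le_cos_of_nonneg_of_le_pi (abs_nonneg _) _ hle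
        · calc |ξ * 1| ≤ 1 := by simpa using h1
            _ ≤ Real.pi := by linarith [Real.pi_gt_three]
    _ = Real.cos (ξ * x) := Real.cos_abs _

lemma gker_one_pos : 0 < gker 1 := by
  have h : gker 1 = 2 * (1 - Real.cos 1) / 1 ^ 2 := gker_eq 1 one_ne_zero
  rw [h]
  have h1 : Real.cos 1 ≤ 2/3 := Real.cos_one_le.trans (by norm_num)
  norm_num
  linarith

/-! ### Auxiliary lemmas: characteristic function bounds -/

lemma cos_abs_le_exp {x : ℝ} (hx : |x| ≤ 1) : |Real.cos x| ≤ Real.exp (-(43/96) * x ^ 2) := by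
  have hb := Real.cos_bound hx
  have hx2 : x ^ 2 ≤ 1 := by
    have := abs_nonneg x
    nlinarith [_root_.sq_abs x]
  have h4 : |x| ^ 4 ≤ x ^ 2 := by
    nlinarith [_root_.sq_abs x, sq_nonneg x, abs_nonneg x]
  have hup : Real.cos x ≤ 1 - (43/96) * x ^ 2 := by
    have := abs_le.1 hb
    nlinarith
  have hlo : 0 ≤ Real.cos x := by
    have := abs_le.1 hb
    nlinarith
  rw [_root_.abs_of_nonneg hlo]
  calc Real.cos x ≤ 1 - (43/96) * x ^ 2 := hup
    _ = -(43/96) * x ^ 2 + 1 := by ring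
    _ ≤ Real.exp (-(43/96) * x ^ 2) := Real.add_one_le_exp _

lemma cube_char_sum (n : ℕ) (R : Finset (Fin n)) (v : Fin n → ℝ) :
    ∑ z : Fin n → Bool, Complex.exp ((∑ i ∈ R, v i * pm (z i) : ℝ) * Complex.I)
      = (2 : ℂ) ^ n * ∏ i ∈ R, (Real.cos (v i) : ℂ) := by
  classical
  set F : Fin n → Bool → ℂ := fun i b =>
    if i ∈ R then Complex.exp ((v i * pm b : ℝ) * Complex.I) else 1 with hF
  have step1 : ∀ z : Fin n → Bool,
      Complex.exp ((∑ i ∈ R, v i * pm (z i) : ℝ) * Complex.I)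
        = ∏ i : Fin n, F i (z i) := by
    intro z
    have : (∏ i : Fin n, F i (z i)) = ∏ i ∈ R, Complex.exp ((v i * pm (z i) : ℝ) * Complex.I) := by
      rw [hF]
      exact Finset.prod_ite_mem Finset.univ R _ |>.trans (by rw [Finset.univ_inter])
    rw [this, ← Complex.exp_sum]
    congr 1
    push_cast
    rw [Finset.sum_mul]
  rw [Finset.sum_congr rfl (fun z _ => step1 z)]
  rw [← Fintype.prod_sum F]
  have step2 : ∀ i : Fin n, (∑ b : Bool, F i b) = 2 * (if i ∈ R then (Real.cos (v i) : ℂ) else 1) := by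
    intro i
    rw [hF]
    simp only [Fintype.sum_bool]
    by_cases hi : i ∈ R
    · simp only [hi, if_true, pm]
      rw [Complex.ofReal_cos, Complex.two_cos]
      push_cast
      ring_nf
    · simp [hi]
      norm_num
  rw [Finset.prod_congr rfl (fun i _ => step2 i), Finset.prod_mul_distrib,
    Finset.prod_const, Finset.card_univ, Fintype.card_fin, Fintype.prod_ite_mem]

lemma gauss_interval_le {b : ℝ} (hb : 0 < b) :
    (∫ ξ in (-1:ℝ)..1, Real.exp (-b * ξ ^ 2)) ≤ Real.sqrt (Real.pi / b) := by
  have hint : MeasureTheory.Integrable (fun ξ : ℝ => Real.exp (-b * ξ ^ 2)) :=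
    integrable_exp_neg_mul_sq hb
  rw [intervalIntegral.integral_of_le (by norm_num : (-1:ℝ) ≤ 1)]
  calc (∫ ξ in Set.Ioc (-1:ℝ) 1, Real.exp (-b * ξ ^ 2))
      ≤ ∫ ξ : ℝ, Real.exp (-b * ξ ^ 2) := by
        apply MeasureTheory.setIntegral_le_integral hint
        filter_upwards with ξ using (Real.exp_pos _).le
    _ = Real.sqrt (Real.pi / b) := integral_gaussian b

/-- Anti-concentration after a restriction, for an LTF with critical index `h`.
There is a universal constant `C` such that the following holds. Let `w ∈ ℝ^n` be
sorted (`|w₁| ≥ ... ≥ |w_n|`, 0-indexed) with `μ`-critical index `h`, so the tail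
`T = {i : h ≤ i}` is `μ`-regular (and non-degenerate: `‖w_T‖₂ > 0`). Let `I ⊆ T`
with `‖w_I‖₂ ≤ √(p/μ)·‖w_T‖₂` where `0 < p < μ/2`. Then for every fixed
assignment `zfix` to the first `h` variables and every `t > 0`, the probability
over a uniform assignment `z` to the tail variables that
`⟨w_{[n]\I}, z_{[n]\I}⟩ ∈ θ ± t·√(p/μ)·‖w_T‖₂` is at most `C·(t·√(p/μ) + μ)`. -/
theorem restricted_ltf_anticoncentration_small_critical_index :
    ∃ C : ℝ, 0 < C ∧
      ∀ (n h : ℕ) (μ p t θ : ℝ) (w : Fin n → ℝ) (I : Finset (Fin n)),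
        0 < μ → μ < 1 → 0 < p → p < μ / 2 → 0 < t →
        (∀ i j : Fin n, i ≤ j → |w j| ≤ |w i|) →
        (∀ i : Fin n, h ≤ (i : ℕ) →
          |w i| ≤ μ * Real.sqrt (∑ j ∈ univ.filter (fun j : Fin n => h ≤ (j : ℕ)), w j ^ 2)) →
        (∀ i ∈ I, h ≤ (i : ℕ)) →
        Real.sqrt (∑ i ∈ I, w i ^ 2)
          ≤ Real.sqrt (p / μ) *
              Real.sqrt (∑ j ∈ univ.filter (fun j : Fin n => h ≤ (j : ℕ)), w j ^ 2) →
        0 < ∑ j ∈ univ.filter (fun j : Fin n => h ≤ (j : ℕ)), w j ^ 2 →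
        ∀ zfix : Fin n → Bool,
          pr (unif n) (fun z =>
              (∑ i ∈ Iᶜ, w i * pm (if (i : ℕ) < h then zfix i else z i)) ∈
                Set.Icc
                  (θ - t * Real.sqrt (p / μ) *
                    Real.sqrt (∑ j ∈ univ.filter (fun j : Fin n => h ≤ (j : ℕ)), w j ^ 2))
                  (θ + t * Real.sqrt (p / μ) *
                    Real.sqrt (∑ j ∈ univ.filter (fun j : Fin n => h ≤ (j : ℕ)), w j ^ 2)))
            ≤ C * (t * Real.sqrt (p / μ) + μ) := by
  classical
  refine ⟨Real.sqrt (192 * Real.pi / 43) / gker 1,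
    div_pos (Real.sqrt_pos.2 (by positivity)) gker_one_pos, ?_⟩
  intro n h μ p t θ w I hμ hμ1 hp hpμ ht hsort hreg hIT hInorm hσ2 zfix
  set T : Finset (Fin n) := univ.filter (fun j : Fin n => h ≤ (j : ℕ)) with hT
  set σ2 : ℝ := ∑ j ∈ T, w j ^ 2 with hσ2def
  set σ : ℝ := Real.sqrt σ2 with hσdef
  have hσpos : 0 < σ := Real.sqrt_pos.2 hσ2
  have hσsq : σ ^ 2 = σ2 := Real.sq_sqrt hσ2.le
  have hsq : 0 < Real.sqrt (p / μ) := Real.sqrt_pos.2 (by positivity)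
  set A : ℝ := t * Real.sqrt (p / μ) + μ with hA
  have hApos : 0 < A := by positivity
  set r : ℝ := t * Real.sqrt (p / μ) * σ with hrdef
  have hrpos : 0 < r := by positivity
  set s : ℝ := max r (μ * σ) with hsdef
  have hspos : 0 < s := lt_max_of_lt_left hrpos
  have hμσs : μ * σ ≤ s := le_max_right _ _
  have hrs : r ≤ s := le_max_left _ _
  have hsle : s ≤ A * σ := by
    rw [hsdef, hA]
    apply max_le
    · rw [hrdef]; nlinarith
    · nlinarith
  set R : Finset (Fin n) := Iᶜ.filter (fun i : Fin n => ¬ ((i : ℕ) < h)) with hR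
  set K : ℝ := ∑ i ∈ R, w i ^ 2 with hK
  have hRTI : R = T \ I := by
    ext i
    simp only [hR, hT, Finset.mem_sdiff, Finset.mem_filter, Finset.mem_compl, Finset.mem_univ,
      true_and, not_lt]
    tauto
  have hITsub : I ⊆ T := by
    intro i hi
    simp only [hT, Finset.mem_filter, Finset.mem_univ, true_and]
    exact hIT i hi
  have hIsum : ∑ i ∈ I, w i ^ 2 ≤ (p / μ) * σ2 := by
    have h2 : (0:ℝ) ≤ ∑ i ∈ I, w i ^ 2 := Finset.sum_nonneg fun _ _ => sq_nonneg _
    calc ∑ i ∈ I, w i ^ 2 = Real.sqrt (∑ i ∈ I, w i ^ 2) ^ 2 := (Real.sq_sqrt h2).symm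
      _ ≤ (Real.sqrt (p / μ) * σ) ^ 2 := by
          apply pow_le_pow_left₀ (Real.sqrt_nonneg _) hInorm
      _ = (p / μ) * σ2 := by
          rw [mul_pow, Real.sq_sqrt (by positivity : (0:ℝ) ≤ p / μ), hσsq]
  have hKeq : K = σ2 - ∑ i ∈ I, w i ^ 2 := by
    rw [hK, hRTI, Finset.sum_sdiff_eq_sub hITsub]
  have hpμhalf : p / μ ≤ 1 / 2 := by
    rw [div_le_div_iff₀ hμ (by norm_num)]; linarith
  have hKge : σ2 / 2 ≤ K := by nlinarith
  have hKpos : 0 < K := by linarith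
  set c : ℝ := ∑ i ∈ Iᶜ.filter (fun i : Fin n => (i : ℕ) < h), w i * pm (zfix i) with hc
  set X : (Fin n → Bool) → ℝ := fun z => ∑ i ∈ R, w i * pm (z i) with hX
  have hsplit : ∀ z : Fin n → Bool,
      (∑ i ∈ Iᶜ, w i * pm (if (i : ℕ) < h then zfix i else z i)) = c + X z := by
    intro z
    rw [← Finset.sum_filter_add_sum_filter_not Iᶜ (fun i : Fin n => (i : ℕ) < h)]
    congr 1
    · rw [hc]; apply Finset.sum_congr rfl; intro i hi
      rw [Finset.mem_filter] at hi; rw [if_pos hi.2]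
    · rw [hX, hR]; apply Finset.sum_congr rfl; intro i hi
      rw [Finset.mem_filter] at hi; rw [if_neg hi.2]
  set m : ℝ := θ - c with hm
  set P : (Fin n → Bool) → Prop := fun z =>
      (∑ i ∈ Iᶜ, w i * pm (if (i : ℕ) < h then zfix i else z i)) ∈
        Set.Icc (θ - r) (θ + r) with hP
  have hPabs : ∀ z, P z → |(X z - m) / s| ≤ 1 := by
    intro z hz
    rw [hP] at hz
    simp only [hsplit z, Set.mem_Icc] at hz
    rw [abs_div, abs_of_pos hspos, div_le_one hspos, hm, abs_le]
    constructor <;> linarith [hz.1, hz.2, hrs]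
  have hcard : (Fintype.card (Fin n → Bool) : ℝ) = 2 ^ n := by
    simp [Fintype.card_fun]
  set q : ℝ := ((2:ℝ) ^ n)⁻¹ with hq
  have hqpos : 0 < q := by positivity
  have hunif : ∀ z : Fin n → Bool, ((unif n) z).toReal = q := by
    intro z
    rw [unif, PMF.uniformOfFintype_apply, ENNReal.toReal_inv, hq]
    norm_num [Fintype.card_fun]
  have hpr : pr (unif n) P = ∑ z : Fin n → Bool, if P z then q else 0 := by
    rw [pr]
    apply Finset.sum_congr rfl
    intro z _
    split_ifs with hz
    · exact hunif z
    · rfl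
  set g1 : ℝ := gker 1 with hg1
  have hg1pos : 0 < g1 := gker_one_pos
  -- Step A: pointwise domination by the kernel
  have stepA : pr (unif n) P ≤ q / g1 * ∑ z : Fin n → Bool, gker ((X z - m) / s) := by
    rw [hpr, Finset.mul_sum]
    apply Finset.sum_le_sum
    intro z _
    split_ifs with hz
    · have h1 : g1 ≤ gker ((X z - m) / s) := by rw [hg1]; exact gker_ge _ (hPabs z hz)
      have h2 : q / g1 * g1 ≤ q / g1 * gker ((X z - m) / s) :=
        mul_le_mul_of_nonneg_left h1 (by positivity)
      calc q = q / g1 * g1 := by field_simp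
        _ ≤ q / g1 * gker ((X z - m) / s) := h2
    · exact mul_nonneg (by positivity) (gker_nonneg _)
  -- Step B: swap sum and integral
  have stepB : (∑ z : Fin n → Bool, gker ((X z - m) / s))
      = ∫ ξ in (-1:ℝ)..1, ∑ z : Fin n → Bool, (1 - |ξ|) * Real.cos (ξ * ((X z - m) / s)) := by
    rw [intervalIntegral.integral_finset_sum (fun z _ => intKer ((X z - m) / s) (-1) 1)]
    simp only [gker]
  -- characteristic function bound
  have hchar : ∀ u : ℝ, |u| ≤ 1 / s →
      (∑ z : Fin n → Bool, Real.cos (u * (X z - m))) ≤ 2 ^ n * Real.exp (-(43/96) * u ^ 2 * K) := by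
    intro u hu
    have h1 : ∀ z : Fin n → Bool, Real.cos (u * (X z - m))
        = (Complex.exp ((u * (X z - m) : ℝ) * Complex.I)).re :=
      fun z => (Complex.exp_ofReal_mul_I_re _).symm
    rw [Finset.sum_congr rfl (fun z _ => h1 z), ← Complex.re_sum]
    have h2 : (∑ z : Fin n → Bool, Complex.exp ((u * (X z - m) : ℝ) * Complex.I))
        = (∑ z : Fin n → Bool, Complex.exp ((u * X z : ℝ) * Complex.I))
            * Complex.exp ((-(u * m) : ℝ) * Complex.I) := by
      rw [Finset.sum_mul]
      apply Finset.sum_congr rfl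
      intro z _
      rw [← Complex.exp_add]
      congr 1
      push_cast
      ring
    have h3 : (∑ z : Fin n → Bool, Complex.exp ((u * X z : ℝ) * Complex.I))
        = (2 : ℂ) ^ n * ∏ i ∈ R, (Real.cos (u * w i) : ℂ) := by
      rw [← cube_char_sum n R (fun i => u * w i)]
      apply Finset.sum_congr rfl
      intro z _
      have harg : u * X z = ∑ i ∈ R, u * w i * pm (z i) := by
        rw [hX]
        simp only
        rw [Finset.mul_sum]
        exact Finset.sum_congr rfl (fun i _ => by ring)
      rw [harg]
    rw [h2, h3]
    calc (((2:ℂ) ^ n * ∏ i ∈ R, (Real.cos (u * w i) : ℂ))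
            * Complex.exp ((-(u * m) : ℝ) * Complex.I)).re
        ≤ ‖(((2:ℂ) ^ n * ∏ i ∈ R, (Real.cos (u * w i) : ℂ))
            * Complex.exp ((-(u * m) : ℝ) * Complex.I))‖ := Complex.re_le_norm _
      _ = 2 ^ n * ∏ i ∈ R, |Real.cos (u * w i)| := by
          rw [norm_mul, norm_mul, Complex.norm_exp_ofReal_mul_I, mul_one, norm_pow, norm_prod]
          simp only [Complex.norm_real, Real.norm_eq_abs, Complex.norm_two]
      _ ≤ 2 ^ n * ∏ i ∈ R, Real.exp (-(43/96) * (u * w i) ^ 2) := by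
          apply mul_le_mul_of_nonneg_left _ (by positivity)
          apply Finset.prod_le_prod (fun i _ => abs_nonneg _)
          intro i hi
          apply cos_abs_le_exp
          have hih : h ≤ (i : ℕ) := by
            rw [hR, Finset.mem_filter] at hi
            exact not_lt.1 hi.2
          have hw : |w i| ≤ μ * σ := hreg i hih
          rw [abs_mul]
          calc |u| * |w i| ≤ (1 / s) * (μ * σ) :=
              mul_le_mul hu hw (abs_nonneg _) (by positivity)
            _ ≤ 1 := by
                rw [div_mul_eq_mul_div, one_mul, div_le_one hspos]
                exact hμσs
      _ = 2 ^ n * Real.exp (-(43/96) * u ^ 2 * K) := by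
          rw [← Real.exp_sum]
          rw [hK, Finset.mul_sum]
          rw [Finset.sum_congr rfl (fun i (_ : i ∈ R) =>
            (by ring : -(43/96) * (u * w i) ^ 2 = -(43/96) * u ^ 2 * w i ^ 2))]
  set b : ℝ := (43/96) * K / s ^ 2 with hb
  have hbpos : 0 < b := div_pos (by linarith) (pow_pos hspos 2)
  -- Step C: pointwise integrand bound
  have hptw : ∀ ξ ∈ Set.Icc (-1:ℝ) 1,
      (∑ z : Fin n → Bool, (1 - |ξ|) * Real.cos (ξ * ((X z - m) / s)))
        ≤ 2 ^ n * Real.exp (-b * ξ ^ 2) := by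
    intro ξ hξ
    have hξ1 : |ξ| ≤ 1 := abs_le.2 ⟨hξ.1, hξ.2⟩
    have hfac0 : 0 ≤ 1 - |ξ| := by linarith
    have hfac1 : 1 - |ξ| ≤ 1 := by
      have := abs_nonneg ξ
      linarith
    have harg : ∀ z : Fin n → Bool, ξ * ((X z - m) / s) = (ξ / s) * (X z - m) := by
      intro z; ring
    rw [Finset.sum_congr rfl (fun z _ => by rw [harg z]), ← Finset.mul_sum]
    have huabs : |ξ / s| ≤ 1 / s := by
      rw [abs_div, abs_of_pos hspos]
      gcongr
    have hsum := hchar (ξ / s) huabs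
    have hexp_eq : -(43/96) * (ξ / s) ^ 2 * K = -b * ξ ^ 2 := by
      rw [hb]; field_simp
    rw [hexp_eq] at hsum
    rcases le_total (∑ z : Fin n → Bool, Real.cos ((ξ / s) * (X z - m))) 0 with hS | hS
    · calc (1 - |ξ|) * ∑ z : Fin n → Bool, Real.cos ((ξ / s) * (X z - m))
          ≤ 0 := mul_nonpos_of_nonneg_of_nonpos hfac0 hS
        _ ≤ 2 ^ n * Real.exp (-b * ξ ^ 2) := by positivity
    · calc (1 - |ξ|) * ∑ z : Fin n → Bool, Real.cos ((ξ / s) * (X z - m))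
          ≤ 1 * ∑ z : Fin n → Bool, Real.cos ((ξ / s) * (X z - m)) :=
            mul_le_mul_of_nonneg_right hfac1 hS
        _ = ∑ z : Fin n → Bool, Real.cos ((ξ / s) * (X z - m)) := one_mul _
        _ ≤ 2 ^ n * Real.exp (-b * ξ ^ 2) := hsum
  have hcont : Continuous (fun ξ : ℝ =>
      ∑ z : Fin n → Bool, (1 - |ξ|) * Real.cos (ξ * ((X z - m) / s))) := by
    apply continuous_finset_sum
    intro z _
    exact contKer ((X z - m) / s)
  have stepC : (∫ ξ in (-1:ℝ)..1, ∑ z : Fin n → Bool, (1 - |ξ|) * Real.cos (ξ * ((X z - m) / s)))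
      ≤ ∫ ξ in (-1:ℝ)..1, (2:ℝ) ^ n * Real.exp (-b * ξ ^ 2) := by
    apply intervalIntegral.integral_mono_on (by norm_num)
      (hcont.intervalIntegrable _ _)
      ((continuous_const.mul (Real.continuous_exp.comp
        (continuous_const.mul (continuous_pow 2)))).intervalIntegrable _ _)
    intro ξ hξ
    exact hptw ξ hξ
  have stepD : (∫ ξ in (-1:ℝ)..1, (2:ℝ) ^ n * Real.exp (-b * ξ ^ 2))
      ≤ 2 ^ n * Real.sqrt (Real.pi / b) := by
    rw [intervalIntegral.integral_const_mul]
    exact mul_le_mul_of_nonneg_left (gauss_interval_le hbpos) (by positivity)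
  -- final numeric bounds
  have hs2 : s ^ 2 ≤ A ^ 2 * σ2 := by
    have h1 : s ^ 2 ≤ (A * σ) ^ 2 := pow_le_pow_left₀ hspos.le hsle 2
    rw [mul_pow, hσsq] at h1
    exact h1
  have hπb : Real.pi / b ≤ (192 * Real.pi / 43) * A ^ 2 := by
    have h2 : s ^ 2 ≤ A ^ 2 * (2 * K) := by
      have e2 : A ^ 2 * σ2 ≤ A ^ 2 * (2 * K) :=
        mul_le_mul_of_nonneg_left (by linarith) (sq_nonneg A)
      linarith
    rw [div_le_iff₀ hbpos, hb]
    have hrw2 : (192 * Real.pi / 43) * A ^ 2 * ((43/96) * K / s ^ 2)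
        = Real.pi * (A ^ 2 * (2 * K)) / s ^ 2 := by ring
    rw [hrw2, le_div_iff₀ (pow_pos hspos 2)]
    exact mul_le_mul_of_nonneg_left h2 Real.pi_pos.le
  have hsqrtle : Real.sqrt (Real.pi / b) ≤ Real.sqrt (192 * Real.pi / 43) * A := by
    calc Real.sqrt (Real.pi / b) ≤ Real.sqrt ((192 * Real.pi / 43) * A ^ 2) :=
        Real.sqrt_le_sqrt hπb
      _ = Real.sqrt (192 * Real.pi / 43) * A := by
          rw [Real.sqrt_mul (by positivity), Real.sqrt_sq hApos.le]
  have hq2 : q * 2 ^ n = 1 := inv_mul_cancel₀ (by positivity)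
  calc pr (unif n) P ≤ q / g1 * ∑ z : Fin n → Bool, gker ((X z - m) / s) := stepA
    _ = q / g1 * ∫ ξ in (-1:ℝ)..1, ∑ z : Fin n → Bool,
          (1 - |ξ|) * Real.cos (ξ * ((X z - m) / s)) := by rw [stepB]
    _ ≤ q / g1 * ∫ ξ in (-1:ℝ)..1, (2:ℝ) ^ n * Real.exp (-b * ξ ^ 2) :=
        mul_le_mul_of_nonneg_left stepC (by positivity)
    _ ≤ q / g1 * (2 ^ n * Real.sqrt (Real.pi / b)) :=
        mul_le_mul_of_nonneg_left stepD (by positivity)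
    _ = Real.sqrt (Real.pi / b) / g1 := by
        have hrw : q / g1 * (2 ^ n * Real.sqrt (Real.pi / b))
            = (q * 2 ^ n) * (Real.sqrt (Real.pi / b) / g1) := by ring
        rw [hrw, hq2, one_mul]
    _ ≤ (Real.sqrt (192 * Real.pi / 43) * A) / g1 := by gcongr
    _ = Real.sqrt (192 * Real.pi / 43) / g1 * A := by ring


end
end
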